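/- arXiv:1511.07632 — 3 statements merged into one kernel-verified Lean document; each statement's English description precedes it below -/
import Mathlib

section
/- Let E be an infinite-dimensional Banach space with a normalized, shrinking, 1-unconditional basis (e_n) such that for some p ∈ [1,∞) the dual E* is asymptotic ℓ_p with respect to the biorthogonal sequence (e_n*). Then Sz(E,ε) is finite for every ε > 0 and the Szlenk power type of E equals p, i.e., p(E) = p. -/
open Filter Topology Set
open scoped ENNReal NNReal

noncomputable section

/-- The `ε`-Szlenk derivation of a subset of the dual space, w.r.t. the weak* topology. -/
def szlenkDeriv {X : Type*} [NormedAddCommGroup X] [NormedSpace ℝ X] (ε : ℝ)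
    (K : Set (StrongDual ℝ X)) : Set (StrongDual ℝ X) :=
  {f | f ∈ K ∧ ∀ U : Set (WeakDual ℝ X), IsOpen U →
    StrongDual.toWeakDual f ∈ U →
    ε < Metric.diam {g | g ∈ K ∧ StrongDual.toWeakDual g ∈ U}}

/-- Iterated Szlenk derivations `ι_{ε₁}⋯ι_{εₙ} K` for a list `[ε₁, …, εₙ]`. -/
def szlenkDerivList {X : Type*} [NormedAddCommGroup X] [NormedSpace ℝ X] (l : List ℝ)
    (K : Set (StrongDual ℝ X)) : Set (StrongDual ℝ X) :=
  l.foldr szlenkDeriv K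

/-- The closed unit ball of the dual space. -/
def dualUnitBall (X : Type*) [NormedAddCommGroup X] [NormedSpace ℝ X] :
    Set (StrongDual ℝ X) :=
  Metric.closedBall 0 1

/-- `X` has summable Szlenk index with constant `M`. -/
def HasSummableSzlenkWith (X : Type*) [NormedAddCommGroup X] [NormedSpace ℝ X] (M : ℝ) : Prop :=
  ∀ l : List ℝ, (∀ ε ∈ l, 0 < ε) → (szlenkDerivList l (dualUnitBall X)).Nonempty → l.sum ≤ M

/-- `X` has summable Szlenk index. -/
def HasSummableSzlenk (X : Type*) [NormedAddCommGroup X] [NormedSpace ℝ X] : Prop :=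
  ∃ M > 0, HasSummableSzlenkWith X M

/-- When some finite iterate of the Szlenk derivation kills the dual ball, the ε-Szlenk index
`Sz(X, ε)` is the least `n : ℕ` with `ι_ε^n B_{X*} = ∅`. -/
def szlenkIdx (X : Type*) [NormedAddCommGroup X] [NormedSpace ℝ X] (ε : ℝ) : ℕ :=
  sInf {n : ℕ | (szlenkDeriv ε)^[n] (dualUnitBall X) = ∅}

/-- `Sz(X) ≤ ω`: the ε-Szlenk index is finite for every ε > 0. -/
def SzlenkLeOmega (X : Type*) [NormedAddCommGroup X] [NormedSpace ℝ X] : Prop :=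
  ∀ ε : ℝ, 0 < ε → ∃ n : ℕ, (szlenkDeriv ε)^[n] (dualUnitBall X) = ∅

/-- `Sz(X) = ω`: finite ε-Szlenk indices, unbounded as ε → 0. -/
def SzlenkEqOmega (X : Type*) [NormedAddCommGroup X] [NormedSpace ℝ X] : Prop :=
  SzlenkLeOmega X ∧ ∀ N : ℕ, ∃ ε : ℝ, 0 < ε ∧ ((szlenkDeriv ε)^[N] (dualUnitBall X)).Nonempty

/-- `X` has Szlenk power type `v`: `log Sz(X,ε)/|log ε| → v` as `ε → 0⁺`. -/
def HasSzlenkPowerType (X : Type*) [NormedAddCommGroup X] [NormedSpace ℝ X] (v : ℝ) : Prop :=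
  Tendsto (fun ε : ℝ => Real.log (szlenkIdx X ε) / |Real.log ε|) (𝓝[>] (0:ℝ)) (𝓝 v)

/-- `(Σᵢ |a i|^p)^{1/p}`, the maximum of the `|a i|` when `p = ∞`. -/
def pNorm (p : ℝ≥0∞) {ι : Type*} [Fintype ι] (a : ι → ℝ) : ℝ :=
  if p = ∞ then ((Finset.univ.sup fun i => ‖a i‖₊ : ℝ≥0) : ℝ)
  else (∑ i, |a i| ^ p.toReal) ^ (1 / p.toReal)

/-- A normed space `Z` with coordinate functionals `coord` is `C`-asymptotic `ℓ_p`: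
every block sequence `x₁, …, xₙ` of finitely supported vectors with successive supports
contained in `[n, ∞)` (1-based basis indexing; index `m : ℕ` is the `(m+1)`-st basis vector)
satisfies `C⁻¹ (Σ‖xⱼ‖^p)^{1/p} ≤ ‖Σ xⱼ‖ ≤ C (Σ‖xⱼ‖^p)^{1/p}`. -/
def IsAsymptoticLp (p : ℝ≥0∞) (C : ℝ) {Z : Type*} [NormedAddCommGroup Z]
    (coord : ℕ → Z → ℝ) : Prop :=
  ∀ (n : ℕ) (x : Fin n → Z),
    (∀ j, {m | coord m (x j) ≠ 0}.Finite) →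
    (∀ j m, coord m (x j) ≠ 0 → n ≤ m + 1) →
    (∀ (j k : Fin n), j < k → ∀ m m', coord m (x j) ≠ 0 → coord m' (x k) ≠ 0 → m < m') →
    C⁻¹ * pNorm p (fun j => ‖x j‖) ≤ ‖∑ j, x j‖ ∧
      ‖∑ j, x j‖ ≤ C * pNorm p (fun j => ‖x j‖)

/-- `(e, e')` is a 1-unconditional Schauder basis of `E` with biorthogonal functionals `e'`. -/
structure IsBasis1Unconditional {E : Type*} [NormedAddCommGroup E] [NormedSpace ℝ E]
    (e : ℕ → E) (e' : ℕ → StrongDual ℝ E) : Prop where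
  biorth : ∀ m n, e' m (e n) = if m = n then 1 else 0
  expansion : ∀ x : E, HasSum (fun n => e' n x • e n) x
  unconditional : ∀ (x : E) (σ : ℕ → ℝ), (∀ n, σ n = 1 ∨ σ n = -1) →
    ∃ y : E, HasSum (fun n => (σ n * e' n x) • e n) y ∧ ‖y‖ = ‖x‖

/-- The basis `e` of `E` is shrinking: the norm of the restriction of any functional to the
closed span of the tail of the basis tends to `0`. -/
def ShrinkingBasis {E : Type*} [NormedAddCommGroup E] [NormedSpace ℝ E] (e : ℕ → E) : Prop :=
  ∀ f : StrongDual ℝ E,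
    Tendsto (fun k =>
      ‖f.comp ((Submodule.span ℝ (e '' Set.Ici k)).topologicalClosure).subtypeL‖)
      atTop (𝓝 0)

/-- `T` realizes `Y` as the `E`-direct sum `(⊕ₙ Xₙ)_E` with respect to the basis `e`. -/
structure IsDirectSumE {E : Type*} [NormedAddCommGroup E] [NormedSpace ℝ E] (e : ℕ → E)
    (X : ℕ → Type*) [∀ n, NormedAddCommGroup (X n)] [∀ n, NormedSpace ℝ (X n)]
    {Y : Type*} [NormedAddCommGroup Y] [NormedSpace ℝ Y]
    (T : Y →ₗ[ℝ] ∀ n, X n) : Prop where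
  range_eq : Set.range T = {x | Summable fun n => ‖x n‖ • e n}
  norm_eq : ∀ y, ‖y‖ = ‖∑' n, ‖T y n‖ • e n‖

/-- `T` realizes `Y` as the c₀-sum `(⊕ₙ Xₙ)_{c₀}`. -/
structure IsC0Sum (X : ℕ → Type*) [∀ n, NormedAddCommGroup (X n)] [∀ n, NormedSpace ℝ (X n)]
    {Y : Type*} [NormedAddCommGroup Y] [NormedSpace ℝ Y] (T : Y →ₗ[ℝ] ∀ n, X n) : Prop where
  range_eq : Set.range T = {x | Tendsto (fun n => ‖x n‖) atTop (𝓝 0)}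
  norm_eq : ∀ y, ‖y‖ = ⨆ n, ‖T y n‖

/-- `T` realizes `Y` as the `ℓ_p`-sum `(⊕ₙ Xₙ)_{ℓ_p}`. -/
structure IsLpSum (p : ℝ) (X : ℕ → Type*) [∀ n, NormedAddCommGroup (X n)]
    [∀ n, NormedSpace ℝ (X n)] {Y : Type*} [NormedAddCommGroup Y] [NormedSpace ℝ Y]
    (T : Y →ₗ[ℝ] ∀ n, X n) : Prop where
  range_eq : Set.range T = {x | Summable fun n => ‖x n‖ ^ p}
  norm_eq : ∀ y, ‖y‖ = (∑' n, ‖T y n‖ ^ p) ^ (1/p)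

/-- `ν` is a norm on `X`. -/
structure IsNormOn {X : Type*} [NormedAddCommGroup X] [NormedSpace ℝ X] (ν : X → ℝ) : Prop where
  add_le : ∀ x y, ν (x + y) ≤ ν x + ν y
  smul_eq : ∀ (a : ℝ) (x : X), ν (a • x) = |a| * ν x
  eq_zero_iff : ∀ x : X, ν x = 0 ↔ x = 0

/-- The dual norm on `X*` corresponding to the (equivalent) norm `ν` on `X`. -/
def dualNormOf {X : Type*} [NormedAddCommGroup X] [NormedSpace ℝ X]
    (ν : X → ℝ) (f : StrongDual ℝ X) : ℝ :=
  sSup {r | ∃ x : X, ν x ≤ 1 ∧ r = |f x|}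

/-- `sup_n C_q(X_n) < ∞`: a common constant `c` with `Sz(Xₙ, ε) ≤ c ε^{-q}`. -/
def PowerTypeBddWith (X : ℕ → Type*) [∀ n, NormedAddCommGroup (X n)]
    [∀ n, NormedSpace ℝ (X n)] (q : ℝ) : Prop :=
  ∃ c : ℝ, ∀ n, ∀ ε ∈ Set.Ioo (0:ℝ) 1, (szlenkIdx (X n) ε : ℝ) ≤ c * ε ^ (-q)

/-- The fast growing hierarchy: `g 0 n = n + 1`, `g (k+1) n = (g k)^[n] n`. -/
def fastGrowing : ℕ → ℕ → ℕ
  | 0, n => n + 1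
  | k+1, n => (fastGrowing k)^[n] n

end


noncomputable section Helpers
open NormedSpace

section BasisLemmas
variable {E : Type*} [NormedAddCommGroup E] [NormedSpace ℝ E]
  {e : ℕ → E} {e' : ℕ → StrongDual ℝ E}
variable (hb : IsBasis1Unconditional e e') (hnorm : ∀ n, ‖e n‖ = 1)
include hb

/-- finite coordinate projections have norm ≤ 1, together with complements -/
theorem proj_eq (A : Finset ℕ) (x : E) :
    ‖∑ i ∈ A, e' i x • e i‖ ≤ ‖x‖ ∧ ‖x - ∑ i ∈ A, e' i x • e i‖ ≤ ‖x‖ := by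
  classical
  obtain ⟨y, hy, hyn⟩ := hb.unconditional x (fun n => if n ∈ A then 1 else -1)
    (fun n => by by_cases hn : n ∈ A <;> simp [hn])
  have h1 : HasSum (fun n => (if n ∈ A then e' n x • e n else 0)) ((1/2 : ℝ) • (x + y)) := by
    have := ((hb.expansion x).add hy).const_smul (1/2 : ℝ)
    convert this using 2 with n
    by_cases hn : n ∈ A <;> simp [hn, smul_add, smul_smul] <;> ring_nf <;> module
  have h2 : HasSum (fun n => (if n ∈ A then e' n x • e n else 0))
      (∑ i ∈ A, e' i x • e i) := by
    have : HasSum (fun n => (if n ∈ A then e' n x • e n else 0)) (∑ n ∈ A, (if n ∈ A then e' n x • e n else 0)) := hasSum_sum_of_ne_finset_zero (s := A)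
      (f := fun n => (if n ∈ A then e' n x • e n else 0)) (by intro b hb'; simp [hb'])
    simpa using this
  have hxy : ∑ i ∈ A, e' i x • e i = (1/2 : ℝ) • (x + y) := h2.unique h1
  constructor
  · rw [hxy]
    calc ‖(1/2 : ℝ) • (x + y)‖ ≤ (1/2) * (‖x‖ + ‖y‖) := by
          rw [norm_smul]; simp; exact norm_add_le _ _
      _ = ‖x‖ := by rw [hyn]; ring
  · have : x - ∑ i ∈ A, e' i x • e i = (1/2 : ℝ) • (x - y) := by rw [hxy]; module
    rw [this]
    calc ‖(1/2 : ℝ) • (x - y)‖ ≤ (1/2) * (‖x‖ + ‖y‖) := by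
          rw [norm_smul]; simp; exact norm_sub_le _ _
      _ = ‖x‖ := by rw [hyn]; ring


include hb

include hnorm in
theorem coord_le (i : ℕ) (x : E) : |e' i x| ≤ ‖x‖ := by
  have := (proj_eq hb {i} x).1
  simpa [norm_smul, hnorm i] using this

include hnorm in
theorem coord_norm (i : ℕ) : ‖e' i‖ = 1 := by
  refine le_antisymm (ContinuousLinearMap.opNorm_le_bound _ zero_le_one (fun x => by
    simpa using coord_le hb hnorm i x)) ?_
  have h1 : |e' i (e i)| ≤ ‖e' i‖ * ‖e i‖ := (e' i).le_opNorm _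
  rw [hb.biorth i i, hnorm i] at h1
  simpa using h1

/-- vectors are determined by coordinates -/
theorem coord_ext {x y : E} (h : ∀ n, e' n x = e' n y) : x = y := by
  have hx := hb.expansion x
  have hy := hb.expansion y
  simp only [h] at hx
  exact hx.unique hy

theorem coord_finsum (A : Finset ℕ) (c : ℕ → ℝ) (m : ℕ) :
    e' m (∑ i ∈ A, c i • e i) = if m ∈ A then c m else 0 := by
  classical
  rw [map_sum]
  simp only [map_smul, hb.biorth, smul_eq_mul, mul_ite, mul_one, mul_zero]
  exact Finset.sum_ite_eq A m c

/-- dual finite "projection" bound -/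
theorem dual_proj_le (f : StrongDual ℝ E) (A : Finset ℕ) (c : ℕ → ℝ)
    (hc : ∀ i ∈ A, c i = f (e i)) :
    ‖∑ i ∈ A, c i • e' i‖ ≤ ‖f‖ := by
  refine ContinuousLinearMap.opNorm_le_bound _ (norm_nonneg f) (fun x => ?_)
  have key : (∑ i ∈ A, c i • e' i) x = f (∑ i ∈ A, e' i x • e i) := by
    rw [map_sum]
    simp only [ContinuousLinearMap.sum_apply, ContinuousLinearMap.smul_apply, map_smul]
    refine Finset.sum_congr rfl fun i hi => ?_
    rw [hc i hi, smul_eq_mul, smul_eq_mul, mul_comm]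
  rw [key]
  calc ‖f (∑ i ∈ A, e' i x • e i)‖ ≤ ‖f‖ * ‖∑ i ∈ A, e' i x • e i‖ := f.le_opNorm _
    _ ≤ ‖f‖ * ‖x‖ := by
        exact mul_le_mul_of_nonneg_left (proj_eq hb A x).1 (norm_nonneg f)

include hnorm in
theorem dual_sum_le (A : Finset ℕ) (c : ℕ → ℝ) :
    ‖∑ i ∈ A, c i • e' i‖ ≤ ∑ i ∈ A, |c i| := by
  calc ‖∑ i ∈ A, c i • e' i‖ ≤ ∑ i ∈ A, ‖c i • e' i‖ := norm_sum_le _ _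
    _ = ∑ i ∈ A, |c i| := by
        refine Finset.sum_congr rfl fun i _ => ?_
        rw [norm_smul, coord_norm hb hnorm i, mul_one, Real.norm_eq_abs]

/-- the tail `x - P_{<K} x` lies in the closure of the span of the tail basis vectors -/
theorem tail_mem (K : ℕ) (x : E) :
    x - ∑ i ∈ Finset.range K, e' i x • e i ∈
      (Submodule.span ℝ (e '' Set.Ici K)).topologicalClosure := by
  classical
  set z := x - ∑ i ∈ Finset.range K, e' i x • e i with hz
  have hcoord : ∀ n < K, e' n z = 0 := by
    intro n hn
    rw [hz, map_sub, coord_finsum hb]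
    simp [Finset.mem_range.mpr hn]
  have hsum := hb.expansion z
  have hmem : ∀ s : Finset ℕ, ∑ n ∈ s, e' n z • e n ∈
      (Submodule.span ℝ (e '' Set.Ici K) : Submodule ℝ E) := by
    intro s
    refine Submodule.sum_mem _ fun n _ => ?_
    by_cases hn : n < K
    · rw [hcoord n hn]; simp
    · exact Submodule.smul_mem _ _ (Submodule.subset_span ⟨n, not_lt.mp hn, rfl⟩)
  have : z ∈ closure ((Submodule.span ℝ (e '' Set.Ici K) : Submodule ℝ E) : Set E) := by
    refine mem_closure_of_tendsto hsum (Eventually.of_forall fun s => hmem s)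
  exact this

set_option synthInstance.maxHeartbeats 1000000 in
set_option maxHeartbeats 1600000 in
/-- dual tail bound: a functional supported on `Ici K` coordinates is bounded by tail norm -/
theorem dual_tail_le (f : StrongDual ℝ E) (K : ℕ) (A : Finset ℕ) (hA : ∀ i ∈ A, K ≤ i) :
    ‖∑ i ∈ A, f (e i) • e' i‖ ≤
      ‖f.comp ((Submodule.span ℝ (e '' Set.Ici K)).topologicalClosure).subtypeL‖ := by
  refine ContinuousLinearMap.opNorm_le_bound _ (ContinuousLinearMap.opNorm_nonneg _) (fun x => ?_)
  set w := ∑ i ∈ A, e' i x • e i with hw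
  have key : (∑ i ∈ A, f (e i) • e' i) x = f w := by
    rw [hw, map_sum]
    simp only [ContinuousLinearMap.sum_apply, ContinuousLinearMap.smul_apply, map_smul]
    refine Finset.sum_congr rfl fun i hi => ?_
    rw [smul_eq_mul, smul_eq_mul, mul_comm]
  have hwmem : w ∈ (Submodule.span ℝ (e '' Set.Ici K)).topologicalClosure := by
    refine (Submodule.le_topologicalClosure _) ?_
    exact Submodule.sum_mem _ fun i hi =>
      Submodule.smul_mem _ _ (Submodule.subset_span ⟨i, hA i hi, rfl⟩)
  rw [key]
  set g := f.comp ((Submodule.span ℝ (e '' Set.Ici K)).topologicalClosure).subtypeL with hg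
  have h1 : f w = g ⟨w, hwmem⟩ := rfl
  rw [h1]
  have h2 : ‖g ⟨w, hwmem⟩‖ ≤ ‖g‖ * ‖(⟨w, hwmem⟩ :
      ((Submodule.span ℝ (e '' Set.Ici K)).topologicalClosure))‖ :=
    ContinuousLinearMap.le_opNorm _ _
  have h3 : ‖(⟨w, hwmem⟩ : ((Submodule.span ℝ (e '' Set.Ici K)).topologicalClosure))‖ = ‖w‖ :=
    rfl
  rw [h3] at h2
  exact h2.trans (mul_le_mul_of_nonneg_left (proj_eq hb A x).1 (ContinuousLinearMap.opNorm_nonneg g))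


end BasisLemmas

section DerivLemmas
variable {E : Type*} [NormedAddCommGroup E] [NormedSpace ℝ E]

theorem szlenkDeriv_subset (ε : ℝ) (K : Set (StrongDual ℝ E)) : szlenkDeriv ε K ⊆ K :=
  fun _ hf => hf.1

theorem szlenkDeriv_mono {ε ε' : ℝ} (hε : ε' ≤ ε) {K K' : Set (StrongDual ℝ E)}
    (hK : K ⊆ K') (hbdd : Bornology.IsBounded K') :
    szlenkDeriv (X := E) ε K ⊆ szlenkDeriv ε' K' := by
  intro f hf
  refine ⟨hK hf.1, fun U hU hfU => ?_⟩
  have h1 := hf.2 U hU hfU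
  refine lt_of_le_of_lt hε (h1.trans_le ?_)
  refine Metric.diam_mono (fun g hg => ⟨hK hg.1, hg.2⟩) ?_
  exact hbdd.subset (fun g hg => hg.1)

theorem szlenkDeriv_iter_subset (ε : ℝ) (K : Set (StrongDual ℝ E)) (n : ℕ) :
    (szlenkDeriv ε)^[n] K ⊆ K := by
  induction n with
  | zero => simp
  | succ n ih =>
      rw [Function.iterate_succ_apply']
      exact (szlenkDeriv_subset _ _).trans ih

theorem szlenkDeriv_iter_mono {ε ε' : ℝ} (hε : ε' ≤ ε) {K : Set (StrongDual ℝ E)}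
    (hbdd : Bornology.IsBounded K) (n : ℕ) :
    (szlenkDeriv (X := E) ε)^[n] K ⊆ (szlenkDeriv ε')^[n] K := by
  induction n with
  | zero => simp
  | succ n ih =>
      rw [Function.iterate_succ_apply', Function.iterate_succ_apply']
      exact (szlenkDeriv_mono hε ih (hbdd.subset (szlenkDeriv_iter_subset _ _ _))).trans
        (subset_rfl)

theorem szlenkDeriv_iter_anti (ε : ℝ) (K : Set (StrongDual ℝ E)) {m n : ℕ} (h : m ≤ n) :
    (szlenkDeriv ε)^[n] K ⊆ (szlenkDeriv ε)^[m] K := by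
  obtain ⟨k, rfl⟩ := Nat.exists_eq_add_of_le h
  rw [add_comm, Function.iterate_add_apply]
  exact szlenkDeriv_iter_subset _ _ _

/-- basic weak-star neighborhood -/
def wkNbhd (f : StrongDual ℝ E) (x : ℕ → E) (A : Finset ℕ) (δ : ℝ) : Set (WeakDual ℝ E) :=
  {h | ∀ i ∈ A, |h (x i) - f (x i)| < δ}

theorem wkNbhd_isOpen (f : StrongDual ℝ E) (x : ℕ → E) (A : Finset ℕ) (δ : ℝ) :
    IsOpen (wkNbhd f x A δ) := by
  have : wkNbhd f x A δ = ⋂ i ∈ A, {h : WeakDual ℝ E | |h (x i) - f (x i)| < δ} := by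
    ext h; simp [wkNbhd]
  rw [this]
  refine isOpen_biInter_finset fun i _ => ?_
  have hc : Continuous fun h : WeakDual ℝ E => |h (x i) - f (x i)| :=
    ((WeakDual.eval_continuous (x i)).sub continuous_const).abs
  exact isOpen_lt hc continuous_const

theorem wkNbhd_mem_self (f : StrongDual ℝ E) (x : ℕ → E) (A : Finset ℕ) {δ : ℝ} (hδ : 0 < δ) :
    StrongDual.toWeakDual f ∈ wkNbhd f x A δ := by
  intro i _
  simp [StrongDual.coe_toWeakDual, hδ]

/-- extraction: from a point of the derivation, get a far-away neighbor in any open set -/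
theorem deriv_step {ε : ℝ} (hε : 0 < ε) {K : Set (StrongDual ℝ E)} (hbdd : Bornology.IsBounded K)
    {f : StrongDual ℝ E} (hf : f ∈ szlenkDeriv ε K) {U : Set (WeakDual ℝ E)} (hU : IsOpen U)
    (hfU : StrongDual.toWeakDual f ∈ U) :
    ∃ g ∈ K, StrongDual.toWeakDual g ∈ U ∧ ε / 2 < ‖g - f‖ := by
  have hd := hf.2 U hU hfU
  set S := {g | g ∈ K ∧ StrongDual.toWeakDual g ∈ U} with hS
  have hSb : Bornology.IsBounded S := hbdd.subset (fun g hg => hg.1)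
  by_contra hcon
  push_neg at hcon
  have hfS : f ∈ S := ⟨hf.1, hfU⟩
  have : Metric.diam S ≤ ε := by
    refine Metric.diam_le_of_forall_dist_le hε.le fun g hg h hh => ?_
    have h1 : ‖g - f‖ ≤ ε / 2 := hcon g hg.1 hg.2
    have h2 : ‖h - f‖ ≤ ε / 2 := hcon h hh.1 hh.2
    calc dist g h ≤ dist g f + dist f h := dist_triangle _ _ _
      _ ≤ ε / 2 + ε / 2 := by
          rw [dist_eq_norm, dist_eq_norm]
          exact add_le_add h1 (by rwa [norm_sub_rev] at h2)
      _ = ε := by ring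
  exact absurd hd (not_lt.mpr this)

/-- norm witness -/
theorem exists_witness {d : StrongDual ℝ E} {r : ℝ} (h : r < ‖d‖) (hr : 0 ≤ r) :
    ∃ x : E, ‖x‖ ≤ 1 ∧ r < |d x| := by
  by_contra hcon
  push_neg at hcon
  refine absurd h (not_lt.mpr ?_)
  refine ContinuousLinearMap.opNorm_le_bound _ hr fun x => ?_
  rcases eq_or_ne x 0 with rfl | hx
  · simp
  · have hxn : 0 < ‖x‖ := norm_pos_iff.mpr hx
    have h1 : ‖(‖x‖)⁻¹ • x‖ ≤ 1 := by
      rw [norm_smul, norm_inv, norm_norm, inv_mul_cancel₀ hxn.ne']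
    have h2 := hcon _ h1
    rw [map_smul, smul_eq_mul, abs_mul, abs_inv, abs_norm] at h2
    rw [Real.norm_eq_abs]
    calc |d x| = ‖x‖ * ((‖x‖)⁻¹ * |d x|) := by field_simp
      _ ≤ ‖x‖ * r := mul_le_mul_of_nonneg_left h2 hxn.le
      _ = r * ‖x‖ := mul_comm _ _


end DerivLemmas

section PNormLemmas

theorem pNorm_const {p : ℝ} (hp : 1 ≤ p) (n : ℕ) {a : ℝ} (ha : 0 ≤ a) :
    pNorm (ENNReal.ofReal p) (fun _ : Fin n => a) = (n : ℝ) ^ (1/p) * a := by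
  have hp0 : (0:ℝ) < p := lt_of_lt_of_le one_pos hp
  rw [pNorm, if_neg ENNReal.ofReal_ne_top, ENNReal.toReal_ofReal hp0.le]
  rw [Finset.sum_const, Finset.card_univ, Fintype.card_fin, nsmul_eq_mul]
  rw [abs_of_nonneg ha, Real.mul_rpow (Nat.cast_nonneg n) (Real.rpow_nonneg ha p)]
  congr 1
  rw [← Real.rpow_mul ha, mul_one_div_cancel hp0.ne', Real.rpow_one]

theorem pNorm_ge {p : ℝ} (hp : 1 ≤ p) (n : ℕ) (a : Fin n → ℝ) {b : ℝ} (hb : 0 ≤ b)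
    (h : ∀ j, b ≤ a j) : (n : ℝ) ^ (1/p) * b ≤ pNorm (ENNReal.ofReal p) a := by
  have hp0 : (0:ℝ) < p := lt_of_lt_of_le one_pos hp
  rw [pNorm, if_neg ENNReal.ofReal_ne_top, ENNReal.toReal_ofReal hp0.le]
  rw [← pNorm_const hp n hb, pNorm, if_neg ENNReal.ofReal_ne_top,
    ENNReal.toReal_ofReal hp0.le]
  refine Real.rpow_le_rpow (by positivity) ?_ (by positivity)
  refine Finset.sum_le_sum fun j _ => ?_
  refine Real.rpow_le_rpow (abs_nonneg _) ?_ hp0.le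
  rw [abs_of_nonneg hb]
  exact le_trans (le_abs_self b |>.trans_eq (abs_of_nonneg hb)) ((h j).trans (le_abs_self _))

end PNormLemmas

section LowerBound
variable {E : Type*} [NormedAddCommGroup E] [NormedSpace ℝ E]
  {e : ℕ → E} {e' : ℕ → StrongDual ℝ E} {p C : ℝ}
variable (hb : IsBasis1Unconditional e e') (hnorm : ∀ n, ‖e n‖ = 1)
  (hp : 1 ≤ p) (hC : 1 ≤ C)
  (hasy : IsAsymptoticLp (ENNReal.ofReal p) C (fun n (f : StrongDual ℝ E) => f (e n)))
include hb hnorm hp hC hasy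

omit hp hC hasy in
/-- weak-star convergence of perturbations along the dual basis -/
theorem tendsto_perturb (f : StrongDual ℝ E) (a : ℝ) :
    Tendsto (fun m => StrongDual.toWeakDual (f + a • e' m)) atTop
      (𝓝 (StrongDual.toWeakDual f)) := by
  rw [tendsto_iff_forall_eval_tendsto_topDualPairing]
  intro y
  show Tendsto (fun m => (f + a • e' m) y) atTop (𝓝 (f y))
  simp only [topDualPairing_apply, StrongDual.coe_toWeakDual,
    ContinuousLinearMap.add_apply, ContinuousLinearMap.smul_apply, smul_eq_mul]
  have h0 : Tendsto (fun m => e' m y) atTop (𝓝 0) := by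
    have h1 : Tendsto (fun m => e' m y • e m) atTop (𝓝 0) :=
      (hb.expansion y).summable.tendsto_atTop_zero
    have h2 : Tendsto (fun m => ‖e' m y • e m‖) atTop (𝓝 0) := by
      simpa using h1.norm
    rw [tendsto_zero_iff_norm_tendsto_zero]
    refine h2.congr fun m => ?_
    rw [norm_smul, hnorm m, mul_one]
  have := (tendsto_const_nhds (x := f y)).add (h0.const_mul a)
  simpa using this

/-- norm estimate for spread-out sums of dual basis vectors -/
theorem sumF_norm_le {a : ℝ} (ha : 0 < a) (n : ℕ) (F : Finset ℕ)
    (hF : ↑F ⊆ Set.Ici n) (hcard : F.card ≤ n) :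
    ‖∑ i ∈ F, a • e' i‖ ≤ C * ((F.card : ℝ) ^ (1/p) * a) := by
  classical
  set ι := F.orderIsoOfFin rfl with hι
  set x : Fin F.card → StrongDual ℝ E := fun j => a • e' (ι j) with hx
  have hbio : ∀ (j : Fin F.card) (m : ℕ), (x j) (e m) ≠ 0 → m = (ι j : ℕ) := by
    intro j m hne
    by_contra hmj
    apply hne
    rw [hx]
    simp only [ContinuousLinearMap.smul_apply, smul_eq_mul, hb.biorth]
    rw [if_neg (fun h => hmj h.symm), mul_zero]
  have key := hasy F.card x
    (fun j => Set.Finite.subset (Set.finite_singleton (ι j : ℕ))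
      (fun m hm => hbio j m hm))
    (fun j m hm => by
      have h1 : (n : ℕ) ≤ (ι j : ℕ) := hF (ι j).2
      have := hbio j m hm
      omega)
    (fun j k hjk m m' hm hm' => by
      rw [hbio j m hm, hbio k m' hm']
      exact_mod_cast (ι.strictMono hjk))
  have hxsum : ∑ j, x j = ∑ i ∈ F, a • e' i := by
    rw [hx, ← Finset.sum_coe_sort F (fun i => a • e' i)]
    exact Fintype.sum_equiv ι.toEquiv _ _ (fun j => rfl)
  have hxnorm : ∀ j, ‖x j‖ = a := by
    intro j
    rw [hx]
    simp only [norm_smul, Real.norm_eq_abs, abs_of_pos ha]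
    rw [coord_norm hb hnorm, mul_one]
  have hpn : pNorm (ENNReal.ofReal p) (fun j => ‖x j‖) = (F.card : ℝ) ^ (1/p) * a := by
    rw [show (fun j => ‖x j‖) = (fun _ : Fin F.card => a) from funext hxnorm]
    exact pNorm_const hp F.card ha.le
  rw [← hxsum]
  calc ‖∑ j, x j‖ ≤ C * pNorm (ENNReal.ofReal p) (fun j => ‖x j‖) := key.2
    _ = C * ((F.card : ℝ) ^ (1/p) * a) := by rw [hpn]

/-- the lower-bound chain: spread-out sums survive many derivations -/
theorem lower_chain {ε : ℝ} (hε : 0 < ε) (n : ℕ)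
    (hn : C * ((n : ℝ) ^ (1/p) * (2*ε)) ≤ 1) :
    ∀ j, ∀ F : Finset ℕ, ↑F ⊆ Set.Ici n → F.card + j ≤ n →
      (∑ i ∈ F, (2*ε) • e' i) ∈ (szlenkDeriv ε)^[j] (dualUnitBall E) := by
  have h2ε : (0:ℝ) < 2*ε := by linarith
  intro j
  induction j with
  | zero =>
      intro F hF hcard
      rw [Function.iterate_zero_apply, dualUnitBall, Metric.mem_closedBall,
        dist_zero_right]
      calc ‖∑ i ∈ F, (2*ε) • e' i‖ ≤ C * ((F.card : ℝ) ^ (1/p) * (2*ε)) :=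
            sumF_norm_le hb hnorm hp hC hasy h2ε n F hF (by omega)
        _ ≤ C * ((n : ℝ) ^ (1/p) * (2*ε)) := by
            refine mul_le_mul_of_nonneg_left ?_ (by linarith)
            refine mul_le_mul_of_nonneg_right ?_ h2ε.le
            exact Real.rpow_le_rpow (Nat.cast_nonneg _)
              (Nat.cast_le.mpr (by omega)) (by positivity)
        _ ≤ 1 := hn
  | succ j ih =>
      intro F hF hcard
      rw [Function.iterate_succ_apply']
      refine ⟨ih F hF (by omega), fun U hU hfU => ?_⟩
      set f := ∑ i ∈ F, (2*ε) • e' i with hf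
      -- find two perturbation indices inside U
      have hev : ∀ᶠ m in atTop, (n ≤ m ∧ ∀ i ∈ F, i < m) ∧
          StrongDual.toWeakDual (f + (2*ε) • e' m) ∈ U := by
        refine Eventually.and ?_ ?_
        · rw [eventually_atTop]
          refine ⟨max n ((F.sup id) + 1), fun m hm => ⟨le_trans (le_max_left _ _) hm, ?_⟩⟩
          intro i hi
          have : i ≤ F.sup id := Finset.le_sup (f := id) hi
          have := le_trans (le_max_right n ((F.sup id) + 1)) hm
          omega
        · exact (tendsto_perturb hb hnorm f (2*ε)).eventually_mem (hU.mem_nhds hfU)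
      obtain ⟨m₁, hm₁⟩ := hev.exists
      obtain ⟨m₂, hm₂, hm₁₂⟩ := (hev.and (eventually_gt_atTop m₁)).exists
      -- the two perturbed points
      have hmem : ∀ m, n ≤ m → (∀ i ∈ F, i < m) →
          f + (2*ε) • e' m ∈ (szlenkDeriv ε)^[j] (dualUnitBall E) := by
        intro m hmn hmF
        have hnotin : m ∉ F := fun h => lt_irrefl m (hmF m h)
        have : f + (2*ε) • e' m = ∑ i ∈ insert m F, (2*ε) • e' i := by
          rw [Finset.sum_insert hnotin, hf, add_comm]
        rw [this]
        refine ih (insert m F) ?_ ?_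
        · intro i hi
          rcases Finset.mem_insert.mp hi with rfl | hi
          · exact hmn
          · exact hF hi
        · rw [Finset.card_insert_of_notMem hnotin]; omega
      set S := {g | g ∈ (szlenkDeriv ε)^[j] (dualUnitBall E) ∧
        StrongDual.toWeakDual g ∈ U} with hS
      have hg₁ : f + (2*ε) • e' m₁ ∈ S := ⟨hmem m₁ hm₁.1.1 hm₁.1.2, hm₁.2⟩
      have hg₂ : f + (2*ε) • e' m₂ ∈ S := ⟨hmem m₂ hm₂.1.1 hm₂.1.2, hm₂.2⟩
      have hSbdd : Bornology.IsBounded S := by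
        refine (Metric.isBounded_closedBall (x := (0 : StrongDual ℝ E)) (r := 1)).subset ?_
        exact fun g hg => szlenkDeriv_iter_subset ε (dualUnitBall E) j hg.1
      have hdist : 2*ε ≤ dist (f + (2*ε) • e' m₁) (f + (2*ε) • e' m₂) := by
        rw [dist_eq_norm]
        have heq : f + (2*ε) • e' m₁ - (f + (2*ε) • e' m₂) = (2*ε) • (e' m₁ - e' m₂) := by
          abel_nf
          module
        rw [heq]
        have happ : ((2*ε) • (e' m₁ - e' m₂)) (e m₁) = 2*ε := by
          simp [hb.biorth, (Nat.ne_of_gt hm₁₂ : m₂ ≠ m₁)]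
        have := ((2*ε) • (e' m₁ - e' m₂)).le_opNorm (e m₁)
        rw [happ, hnorm m₁, mul_one, Real.norm_eq_abs, abs_of_pos h2ε] at this
        exact this
      calc ε < 2*ε := by linarith
        _ ≤ dist (f + (2*ε) • e' m₁) (f + (2*ε) • e' m₂) := hdist
        _ ≤ Metric.diam S := Metric.dist_le_diam_of_mem hSbdd hg₁ hg₂

end LowerBound

section UpperBound
variable {E : Type*} [NormedAddCommGroup E] [NormedSpace ℝ E]
  {e : ℕ → E} {e' : ℕ → StrongDual ℝ E}
variable (hb : IsBasis1Unconditional e e') (hnorm : ∀ n, ‖e n‖ = 1)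
  (hshr : ShrinkingBasis e)

omit [NormedSpace ℝ E] in
theorem apply_tail_le' [NormedSpace ℝ E] (f : StrongDual ℝ E) (K : ℕ) {z : E}
    (hz : z ∈ (Submodule.span ℝ (e '' Set.Ici K)).topologicalClosure) :
    |f z| ≤ ‖f.comp ((Submodule.span ℝ (e '' Set.Ici K)).topologicalClosure).subtypeL‖ * ‖z‖ := by
  set g := f.comp ((Submodule.span ℝ (e '' Set.Ici K)).topologicalClosure).subtypeL with hg
  have h1 : f z = g ⟨z, hz⟩ := rfl
  rw [h1, ← Real.norm_eq_abs]
  exact (g.le_opNorm ⟨z, hz⟩).trans_eq rfl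

omit hnorm hshr in
include hb in
theorem dual_finsum_coord (A : Finset ℕ) (c : ℕ → ℝ) (m : ℕ) :
    (∑ i ∈ A, c i • e' i) (e m) = if m ∈ A then c m else 0 := by
  classical
  simp only [ContinuousLinearMap.sum_apply, ContinuousLinearMap.smul_apply, smul_eq_mul,
    hb.biorth]
  simp only [mul_ite, mul_one, mul_zero]
  exact Finset.sum_ite_eq' A m c

omit hnorm hshr in
include hb in
theorem dual_finsum_apply (f : StrongDual ℝ E) (A : Finset ℕ) (x : E) :
    (∑ i ∈ A, f (e i) • e' i) x = f (∑ i ∈ A, e' i x • e i) := by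
  rw [map_sum]
  simp only [ContinuousLinearMap.sum_apply, ContinuousLinearMap.smul_apply, map_smul]
  refine Finset.sum_congr rfl fun i hi => ?_
  rw [smul_eq_mul, smul_eq_mul, mul_comm]

set_option maxHeartbeats 2000000 in
set_option synthInstance.maxHeartbeats 400000 in
include hb hnorm hshr in
theorem upper_chain {ε : ℝ} (hε : 0 < ε) :
    ∀ n : ℕ, ∀ f ∈ (szlenkDeriv ε)^[n] (dualUnitBall E), ∀ k : ℕ, ∀ η : ℝ, 0 < η →
    ∃ (x : Fin n → StrongDual ℝ E) (a b : Fin n → ℕ) (g : StrongDual ℝ E)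
      (A : Finset ℕ),
      (∀ j, k ≤ a j ∧ a j ≤ b j) ∧
      (∀ j j' : Fin n, j < j' → b j < a j') ∧
      (∀ (j : Fin n) m, (x j) (e m) ≠ 0 → a j ≤ m ∧ m ≤ b j) ∧
      (∀ j, ε/2 - η ≤ ‖x j‖) ∧
      g ∈ dualUnitBall E ∧
      (↑A ⊆ Set.Ici k) ∧
      ‖(∑ j, x j) - ∑ i ∈ A, ((g - f) (e i)) • e' i‖ ≤ η ∧
      (∀ i < k, |(g - f) (e i)| ≤ η / (k+1)) := by
  intro n
  induction n with
  | zero =>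
      intro f hf k η hη
      refine ⟨Fin.elim0, Fin.elim0, Fin.elim0, f, ∅, fun j => j.elim0,
        fun j => j.elim0, fun j => j.elim0, fun j => j.elim0, ?_, by simp, ?_, ?_⟩
      · simpa using hf
      · simpa using hη.le
      · intro i _
        simp only [sub_self, ContinuousLinearMap.zero_apply, abs_zero]
        positivity
  | succ n ih =>
      intro f hf k η hη
      rw [Function.iterate_succ_apply'] at hf
      have hiterB : (szlenkDeriv ε)^[n] (dualUnitBall E) ⊆ dualUnitBall E :=
        szlenkDeriv_iter_subset ε (dualUnitBall E) n
      have hbdd : Bornology.IsBounded ((szlenkDeriv ε)^[n] (dualUnitBall E)) :=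
        (Metric.isBounded_closedBall (x := (0 : StrongDual ℝ E)) (r := 1)).subset hiterB
      -- choose k' ≥ k with small tail norm of f
      obtain ⟨k', hk'tail, hk'ge⟩ :=
        (((hshr f).eventually_lt_const (show (0:ℝ) < η/8 by positivity)).and
          (eventually_ge_atTop k)).exists
      -- δ
      set δ : ℝ := min (η/(8*(k'+1))) (η/(2*(k+1))) with hδdef
      have hδpos : 0 < δ := by
        apply lt_min <;> positivity
      -- the neighborhood and the next functional
      obtain ⟨f₁, hf₁mem, hf₁U, hf₁far⟩ := deriv_step hε hbdd hf
        (wkNbhd_isOpen f e (Finset.range k') δ) (wkNbhd_mem_self f e (Finset.range k') hδpos)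
      set d := f₁ - f with hd
      have hdsmall : ∀ i < k', |d (e i)| < δ := by
        intro i hi
        have := hf₁U i (Finset.mem_range.mpr hi)
        simpa [hd] using this
      -- choose K ≥ k' with small tail norm of d beyond K+1
      obtain ⟨K1, hK1tail, hK1ge⟩ :=
        (((hshr d).eventually_lt_const (show (0:ℝ) < η/8 by positivity)).and
          (eventually_ge_atTop (k'+1))).exists
      set K := K1 - 1 with hKdef
      have hKk' : k' ≤ K := by omega
      have hK1eq : K + 1 = K1 := by omega
      have hKtail : ‖d.comp ((Submodule.span ℝ
          (e '' Set.Ici (K+1))).topologicalClosure).subtypeL‖ < η/8 := by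
        rw [hK1eq]; exact hK1tail
      -- the first block functional
      set x₀ : StrongDual ℝ E := ∑ i ∈ Finset.Icc k' K, d (e i) • e' i with hx₀
      -- lower bound on ‖x₀‖
      have hx₀norm : ε/2 - η/4 ≤ ‖x₀‖ := by
        obtain ⟨xw, hxw1, hxw2⟩ := exists_witness hf₁far (by positivity)
        have hsplit : d xw = d (∑ i ∈ Finset.range k', e' i xw • e i)
            + x₀ xw + d (xw - ∑ i ∈ Finset.range (K+1), e' i xw • e i) := by
          rw [hx₀, dual_finsum_apply hb d (Finset.Icc k' K) xw]
          rw [← map_add, ← map_add]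
          congr 1
          have hun : Finset.range (K+1) = Finset.range k' ∪ Finset.Icc k' K := by
            ext i
            simp only [Finset.mem_union, Finset.mem_range, Finset.mem_Icc]
            omega
          have hdisj : Disjoint (Finset.range k') (Finset.Icc k' K) := by
            rw [Finset.disjoint_left]
            intro i hi1 hi2
            rw [Finset.mem_range] at hi1
            rw [Finset.mem_Icc] at hi2
            omega
          rw [hun, Finset.sum_union hdisj]
          abel
        have h1 : |d (∑ i ∈ Finset.range k', e' i xw • e i)| ≤ η/8 := by
          calc |d (∑ i ∈ Finset.range k', e' i xw • e i)|
              = |∑ i ∈ Finset.range k', e' i xw * d (e i)| := by rw [map_sum]; simp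
            _ ≤ ∑ i ∈ Finset.range k', |e' i xw * d (e i)| := Finset.abs_sum_le_sum_abs _ _
            _ ≤ ∑ i ∈ Finset.range k', δ := by
                refine Finset.sum_le_sum fun i hi => ?_
                rw [abs_mul]
                have hc := coord_le hb hnorm i xw
                have hdm := (hdsmall i (Finset.mem_range.mp hi)).le
                calc |e' i xw| * |d (e i)| ≤ 1 * δ := by
                      refine mul_le_mul (hc.trans hxw1) hdm (abs_nonneg _) zero_le_one
                  _ = δ := one_mul δ
            _ = k' * δ := by rw [Finset.sum_const, Finset.card_range, nsmul_eq_mul]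
            _ ≤ η/8 := by
                have : δ ≤ η/(8*(k'+1)) := min_le_left _ _
                have hkpos : (0:ℝ) < k' + 1 := by positivity
                calc (k':ℝ) * δ ≤ (k'+1) * (η/(8*(k'+1))) := by
                      refine mul_le_mul (by linarith) this hδpos.le (by positivity)
                  _ = η/8 := by field_simp
        have h2 : |d (xw - ∑ i ∈ Finset.range (K+1), e' i xw • e i)| ≤ η/8 := by
          have hzmem := tail_mem hb (K+1) xw
          have := apply_tail_le' d (K+1) hzmem
          have hznorm : ‖xw - ∑ i ∈ Finset.range (K+1), e' i xw • e i‖ ≤ 1 :=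
            (proj_eq hb (Finset.range (K+1)) xw).2.trans hxw1
          calc |d (xw - ∑ i ∈ Finset.range (K+1), e' i xw • e i)|
              ≤ ‖d.comp ((Submodule.span ℝ
                  (e '' Set.Ici (K+1))).topologicalClosure).subtypeL‖ * ‖xw - ∑ i ∈
                  Finset.range (K+1), e' i xw • e i‖ := this
            _ ≤ (η/8) * 1 := by
                refine mul_le_mul hKtail.le hznorm (norm_nonneg _)
                  (by positivity)
            _ = η/8 := mul_one _
        have hx₀xw : ε/2 - η/4 ≤ |x₀ xw| := by
          have : |d xw| ≤ |d (∑ i ∈ Finset.range k', e' i xw • e i)| + |x₀ xw|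
              + |d (xw - ∑ i ∈ Finset.range (K+1), e' i xw • e i)| := by
            rw [hsplit]
            exact (abs_add_three _ _ _)
          have := hxw2.le.trans this
          linarith
        calc ε/2 - η/4 ≤ |x₀ xw| := hx₀xw
          _ ≤ ‖x₀‖ * ‖xw‖ := by rw [← Real.norm_eq_abs]; exact x₀.le_opNorm xw
          _ ≤ ‖x₀‖ * 1 := mul_le_mul_of_nonneg_left hxw1 (norm_nonneg _)
          _ = ‖x₀‖ := mul_one _
      -- apply the induction hypothesis to f₁
      set η'' : ℝ := min (η/(2*(k+1))) (η/4) with hη''def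
      have hη''pos : 0 < η'' := by apply lt_min <;> positivity
      obtain ⟨xs, as, bs, g, A, ihP1, ihP2, ihP3, ihP4, ihP5, ihP6, ihP7, ihP8⟩ :=
        ih f₁ hf₁mem (K+1) η'' hη''pos
      -- assemble
      refine ⟨Fin.cons x₀ xs, Fin.cons k' as, Fin.cons K bs, g, A ∪ Finset.Icc k' K,
        ?_, ?_, ?_, ?_, ihP5, ?_, ?_, ?_⟩
      · -- (1)
        refine Fin.cases ?_ ?_
        · simpa using ⟨hk'ge, hKk'⟩
        · intro j
          simp only [Fin.cons_succ]
          have := ihP1 j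
          omega
      · -- (2)
        refine Fin.cases ?_ ?_
        · refine Fin.cases ?_ ?_
          · intro h; exact absurd h (lt_irrefl _)
          · intro j' _
            simp only [Fin.cons_zero, Fin.cons_succ]
            have := (ihP1 j').1
            omega
        · intro j
          refine Fin.cases ?_ ?_
          · intro h; exact absurd h (Fin.not_lt_zero _).elim
          · intro j' hlt
            simp only [Fin.cons_succ]
            exact ihP2 j j' (by exact_mod_cast Fin.succ_lt_succ_iff.mp hlt)
      · -- (3)
        refine Fin.cases ?_ ?_
        · intro m hm
          simp only [Fin.cons_zero] at hm ⊢
          rw [hx₀, dual_finsum_coord hb (Finset.Icc k' K) (fun i => d (e i)) m] at hm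
          by_cases hmem : m ∈ Finset.Icc k' K
          · exact Finset.mem_Icc.mp hmem
          · rw [if_neg hmem] at hm
            exact absurd rfl hm
        · intro j m hm
          simp only [Fin.cons_succ] at hm ⊢
          exact ihP3 j m hm
      · -- (4)
        refine Fin.cases ?_ ?_
        · simp only [Fin.cons_zero]
          have : η/4 ≤ η := by linarith
          linarith [hx₀norm]
        · intro j
          simp only [Fin.cons_succ]
          have h1 := ihP4 j
          have h2 : η'' ≤ η := (min_le_right _ _).trans (by linarith)
          linarith
      · -- (6)
        intro i hi
        rcases Finset.mem_coe.mp hi |> Finset.mem_union.mp with hi | hi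
        · have := ihP6 (Finset.mem_coe.mpr hi)
          simp only [Set.mem_Ici] at this ⊢
          omega
        · have := Finset.mem_Icc.mp hi
          simp only [Set.mem_Ici]
          omega
      · -- (7) the main norm estimate
        have hAIcc : Disjoint A (Finset.Icc k' K) := by
          rw [Finset.disjoint_right]
          intro i hi hiA
          have h1 := ihP6 (Finset.mem_coe.mpr hiA)
          have h2 := Finset.mem_Icc.mp hi
          simp only [Set.mem_Ici] at h1
          omega
        have hsplitsum : ∀ B : Finset ℕ,
            ∑ i ∈ B, ((g - f) (e i)) • e' i
              = ∑ i ∈ B, ((g - f₁) (e i)) • e' i + ∑ i ∈ B, (d (e i)) • e' i := by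
          intro B
          rw [← Finset.sum_add_distrib]
          refine Finset.sum_congr rfl fun i _ => ?_
          rw [← add_smul]
          congr 1
          simp only [hd, ContinuousLinearMap.sub_apply]
          ring
        have heq : (∑ j, Fin.cons x₀ xs j) - ∑ i ∈ A ∪ Finset.Icc k' K,
            ((g - f) (e i)) • e' i
            = ((∑ j, xs j) - ∑ i ∈ A, ((g - f₁) (e i)) • e' i)
              - (∑ i ∈ A, (d (e i)) • e' i)
              - (∑ i ∈ Finset.Icc k' K, ((g - f₁) (e i)) • e' i) := by
          rw [Fin.sum_cons, Finset.sum_union hAIcc, hsplitsum A, hsplitsum (Finset.Icc k' K),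
            ← hx₀]
          abel
        rw [heq]
        have hT2 : ‖∑ i ∈ A, (d (e i)) • e' i‖ ≤ η/8 := by
          refine le_trans (dual_tail_le hb d (K+1) A (fun i hi => ?_)) hKtail.le
          have := ihP6 (Finset.mem_coe.mpr hi)
          simpa using this
        have hT3 : ‖∑ i ∈ Finset.Icc k' K, ((g - f₁) (e i)) • e' i‖ ≤ η'' := by
          have hcardn : (Finset.Icc k' K).card ≤ K + 1 := by
            rw [Nat.card_Icc]; omega
          have hcard : ((Finset.Icc k' K).card : ℝ) ≤ (K:ℝ) + 1 := by
            exact_mod_cast hcardn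
          have hb1 : ∀ i ∈ Finset.Icc k' K, |(g - f₁) (e i)| ≤ η''/((K:ℝ)+1+1) := by
            intro i hi
            have hiK : i < K + 1 := by
              have := Finset.mem_Icc.mp hi; omega
            have := ihP8 i hiK
            push_cast at this ⊢
            linarith
          have hK2 : (0:ℝ) < (K:ℝ)+1+1 := by positivity
          calc ‖∑ i ∈ Finset.Icc k' K, ((g - f₁) (e i)) • e' i‖
              ≤ ∑ i ∈ Finset.Icc k' K, |(g - f₁) (e i)| := dual_sum_le hb hnorm _ _
            _ ≤ ((Finset.Icc k' K).card : ℝ) * (η''/((K:ℝ)+1+1)) := by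
                have := Finset.sum_le_card_nsmul (Finset.Icc k' K)
                  (fun i => |(g - f₁) (e i)|) (η''/((K:ℝ)+1+1)) hb1
                rwa [nsmul_eq_mul] at this
            _ ≤ ((K:ℝ)+1) * (η''/((K:ℝ)+1+1)) := by
                refine mul_le_mul_of_nonneg_right hcard (by positivity)
            _ = η'' * (((K:ℝ)+1) / ((K:ℝ)+1+1)) := by ring
            _ ≤ η'' * 1 := by
                refine mul_le_mul_of_nonneg_left ?_ hη''pos.le
                rw [div_le_one hK2]
                linarith
            _ = η'' := mul_one _
        have hη''4 : η'' ≤ η/4 := min_le_right _ _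
        calc ‖((∑ j, xs j) - ∑ i ∈ A, ((g - f₁) (e i)) • e' i)
              - (∑ i ∈ A, (d (e i)) • e' i)
              - (∑ i ∈ Finset.Icc k' K, ((g - f₁) (e i)) • e' i)‖
            ≤ ‖((∑ j, xs j) - ∑ i ∈ A, ((g - f₁) (e i)) • e' i)
              - (∑ i ∈ A, (d (e i)) • e' i)‖
              + ‖∑ i ∈ Finset.Icc k' K, ((g - f₁) (e i)) • e' i‖ := norm_sub_le _ _
          _ ≤ (‖(∑ j, xs j) - ∑ i ∈ A, ((g - f₁) (e i)) • e' i‖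
              + ‖∑ i ∈ A, (d (e i)) • e' i‖)
              + ‖∑ i ∈ Finset.Icc k' K, ((g - f₁) (e i)) • e' i‖ := by
              exact add_le_add (norm_sub_le _ _) le_rfl
          _ ≤ (η'' + η/8) + η'' := by
              exact add_le_add (add_le_add ihP7 hT2) hT3
          _ ≤ η := by linarith
      · -- (8)
        intro i hik
        have hik' : i < k' := lt_of_lt_of_le hik hk'ge
        have h1 : |(g - f₁) (e i)| ≤ η''/((K:ℝ)+1+1) := by
          have := ihP8 i (by omega)
          push_cast at this ⊢
          linarith
        have h2 : |d (e i)| < δ := hdsmall i hik'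
        have heq : (g - f) (e i) = (g - f₁) (e i) + d (e i) := by
          simp only [hd, ContinuousLinearMap.sub_apply]
          ring
        rw [heq]
        have h3 : η''/((K:ℝ)+1+1) ≤ η/(2*(k+1)) := by
          have hle : η'' ≤ η/(2*(k+1)) := min_le_left _ _
          have hKpos : (1:ℝ) ≤ (K:ℝ)+1+1 := by
            have : (0:ℝ) ≤ (K:ℝ) := Nat.cast_nonneg _
            linarith
          calc η''/((K:ℝ)+1+1) ≤ η'' := div_le_self hη''pos.le hKpos
            _ ≤ η/(2*(k+1)) := hle
        have h4 : δ ≤ η/(2*(k+1)) := min_le_right _ _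
        calc |(g - f₁) (e i) + d (e i)| ≤ |(g - f₁) (e i)| + |d (e i)| := abs_add_le _ _
          _ ≤ η/(2*(k+1)) + η/(2*(k+1)) := add_le_add (h1.trans h3) (h2.le.trans h4)
          _ = η/(k+1) := by field_simp; ring


end UpperBound

section Assembly
variable {E : Type*} [NormedAddCommGroup E] [NormedSpace ℝ E]
  {e : ℕ → E} {e' : ℕ → StrongDual ℝ E} {p C : ℝ}
variable (hb : IsBasis1Unconditional e e') (hnorm : ∀ n, ‖e n‖ = 1)
  (hshr : ShrinkingBasis e) (hp : 1 ≤ p) (hC : 1 ≤ C)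
  (hasy : IsAsymptoticLp (ENNReal.ofReal p) C (fun n (f : StrongDual ℝ E) => f (e n)))
include hb hnorm hshr hp hC hasy

theorem iter_nonempty_bound {ε : ℝ} (hε : 0 < ε) (hε1 : ε ≤ 1) {n : ℕ}
    (hne : ((szlenkDeriv ε)^[n] (dualUnitBall E)).Nonempty) :
    (n : ℝ) ≤ (6*C/ε) ^ p := by
  have hp0 : (0:ℝ) < p := lt_of_lt_of_le one_pos hp
  have hC0 : (0:ℝ) < C := lt_of_lt_of_le one_pos hC
  obtain ⟨f, hf⟩ := hne
  obtain ⟨x, a, b, g, A, P1, P2, P3, P4, P5, P6, P7, P8⟩ :=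
    upper_chain hb hnorm hshr hε n f hf n (ε/8) (by positivity)
  have key := hasy n x
    (fun j => (Set.finite_Icc (a j) (b j)).subset
      (fun m hm => Set.mem_Icc.mpr (P3 j m hm)))
    (fun j m hm => by
      have h1 := (P1 j).1
      have h2 := (P3 j m hm).1
      omega)
    (fun j k hjk m m' hm hm' => by
      have h1 := (P3 j m hm).2
      have h2 := (P3 k m' hm').1
      have h3 := P2 j k hjk
      omega)
  -- lower estimate on the sum
  have hlow : C⁻¹ * ((n:ℝ)^(1/p) * (3*ε/8)) ≤ ‖∑ j, x j‖ := by
    refine le_trans ?_ key.1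
    refine mul_le_mul_of_nonneg_left ?_ (by positivity)
    refine pNorm_ge hp n (fun j => ‖x j‖) (by positivity) (fun j => ?_)
    have := P4 j
    linarith
  -- upper estimate on the sum
  have hub : ‖∑ j, x j‖ ≤ 2 + ε/8 := by
    have h1 : ‖∑ j, x j‖ ≤ ‖(∑ j, x j) - ∑ i ∈ A, ((g - f) (e i)) • e' i‖
        + ‖∑ i ∈ A, ((g - f) (e i)) • e' i‖ := by
      have h0 := norm_add_le ((∑ j, x j) - ∑ i ∈ A, ((g - f) (e i)) • e' i)
        (∑ i ∈ A, ((g - f) (e i)) • e' i)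
      rwa [sub_add_cancel] at h0
    have h2 : ‖∑ i ∈ A, ((g - f) (e i)) • e' i‖ ≤ ‖g - f‖ :=
      dual_proj_le hb (g - f) A _ (fun i _ => rfl)
    have h3 : ‖g - f‖ ≤ 2 := by
      have hgB : ‖g‖ ≤ 1 := by
        have := P5
        rwa [dualUnitBall, Metric.mem_closedBall, dist_zero_right] at this
      have hfB : ‖f‖ ≤ 1 := by
        have := szlenkDeriv_iter_subset ε (dualUnitBall E) n hf
        rwa [dualUnitBall, Metric.mem_closedBall, dist_zero_right] at this
      calc ‖g - f‖ ≤ ‖g‖ + ‖f‖ := norm_sub_le _ _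
        _ ≤ 2 := by linarith
    linarith
  -- combine
  have hcore : (n:ℝ)^(1/p) ≤ 6*C/ε := by
    have h1 : C⁻¹ * ((n:ℝ)^(1/p) * (3*ε/8)) ≤ 2 + ε/8 := hlow.trans hub
    have h2 : (n:ℝ)^(1/p) * (3*ε/8) ≤ C * (2 + ε/8) := by
      have := mul_le_mul_of_nonneg_left h1 hC0.le
      rwa [← mul_assoc, mul_inv_cancel₀ hC0.ne', one_mul] at this
    have h3 : C * (2 + ε/8) ≤ C * (17/8) := by
      refine mul_le_mul_of_nonneg_left (by linarith) hC0.le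
    have h4 : (n:ℝ)^(1/p) * (3*ε/8) ≤ C * (17/8) := h2.trans h3
    have h5 : (n:ℝ)^(1/p) ≤ C * (17/8) / (3*ε/8) := by
      rw [le_div_iff₀ (by positivity)]
      linarith
    refine h5.trans ?_
    rw [div_le_div_iff₀ (by positivity) hε]
    nlinarith [hC0.le, hε.le]
  have hid : ((n:ℝ)^(1/p))^p = (n:ℝ) := by
    rw [← Real.rpow_mul (Nat.cast_nonneg n), one_div_mul_cancel hp0.ne', Real.rpow_one]
  calc (n:ℝ) = ((n:ℝ)^(1/p))^p := hid.symm
      _ ≤ (6*C/ε)^p := Real.rpow_le_rpow (by positivity) hcore hp0.le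

theorem szlenkLeOmega_of : SzlenkLeOmega E := by
  intro ε hε
  set ε' := min ε 1 with hε'
  have hε'pos : 0 < ε' := lt_min hε one_pos
  have hε'le : ε' ≤ 1 := min_le_right _ _
  refine ⟨⌊(6*C/ε')^p⌋₊ + 1, ?_⟩
  by_contra hne
  rw [← Ne, ← Set.nonempty_iff_ne_empty] at hne
  obtain ⟨f, hf⟩ := hne
  have h1 : ((szlenkDeriv ε')^[⌊(6*C/ε')^p⌋₊ + 1] (dualUnitBall E)).Nonempty :=
    ⟨f, szlenkDeriv_iter_mono (min_le_left ε 1)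
      (Metric.isBounded_closedBall) _ hf⟩
  have h2 := iter_nonempty_bound hb hnorm hshr hp hC hasy hε'pos hε'le h1
  have h3 : ⌊(6*C/ε')^p⌋₊ + 1 ≤ ⌊(6*C/ε')^p⌋₊ := Nat.le_floor h2
  omega

theorem szlenkIdx_le {ε : ℝ} (hε : 0 < ε) (hε1 : ε ≤ 1) :
    (szlenkIdx E ε : ℝ) ≤ (6*C/ε)^p + 1 := by
  have hmem : (szlenkDeriv ε)^[⌊(6*C/ε)^p⌋₊ + 1] (dualUnitBall E) = ∅ := by
    by_contra hne
    rw [← Ne, ← Set.nonempty_iff_ne_empty] at hne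
    have h2 := iter_nonempty_bound hb hnorm hshr hp hC hasy hε hε1 hne
    have h3 : ⌊(6*C/ε)^p⌋₊ + 1 ≤ ⌊(6*C/ε)^p⌋₊ := Nat.le_floor h2
    omega
  have hle : szlenkIdx E ε ≤ ⌊(6*C/ε)^p⌋₊ + 1 := Nat.sInf_le hmem
  have hC0 : (0:ℝ) < C := lt_of_lt_of_le one_pos hC
  calc (szlenkIdx E ε : ℝ) ≤ ((⌊(6*C/ε)^p⌋₊ : ℕ) : ℝ) + 1 := by exact_mod_cast hle
    _ ≤ (6*C/ε)^p + 1 := by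
        have := Nat.floor_le (show (0:ℝ) ≤ (6*C/ε)^p by positivity)
        linarith

theorem szlenkIdx_gt {ε : ℝ} (hε : 0 < ε) (hεC : 2*C*ε ≤ 1) :
    (1/(2*C*ε))^p < (szlenkIdx E ε : ℝ) := by
  have hp0 : (0:ℝ) < p := lt_of_lt_of_le one_pos hp
  have hC0 : (0:ℝ) < C := lt_of_lt_of_le one_pos hC
  set y : ℝ := 1/(2*C*ε) with hy
  have hy0 : (0:ℝ) < y := by rw [hy]; positivity
  set n₀ := ⌊y^p⌋₊ with hn₀
  have hcond : C * ((n₀:ℝ)^(1/p) * (2*ε)) ≤ 1 := by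
    have h1 : (n₀:ℝ) ≤ y^p := Nat.floor_le (by positivity)
    have h2 : (n₀:ℝ)^(1/p) ≤ (y^p)^(1/p) :=
      Real.rpow_le_rpow (Nat.cast_nonneg _) h1 (by positivity)
    have h3 : (y^p)^(1/p) = y := by
      rw [← Real.rpow_mul hy0.le, mul_one_div_cancel hp0.ne', Real.rpow_one]
    have h4 : (n₀:ℝ)^(1/p) ≤ y := h2.trans_eq h3
    calc C * ((n₀:ℝ)^(1/p) * (2*ε)) ≤ C * (y * (2*ε)) := by
          exact mul_le_mul_of_nonneg_left
            (mul_le_mul_of_nonneg_right h4 (by positivity)) hC0.le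
      _ = 1 := by
          rw [hy]
          field_simp
  have hne : ((szlenkDeriv ε)^[n₀] (dualUnitBall E)).Nonempty := by
    refine ⟨∑ i ∈ (∅ : Finset ℕ), (2*ε) • e' i, ?_⟩
    exact lower_chain hb hnorm hp hC hasy hε n₀ hcond n₀ ∅ (by simp) (by simp)
  have hS : {n : ℕ | (szlenkDeriv ε)^[n] (dualUnitBall E) = ∅}.Nonempty :=
    szlenkLeOmega_of hb hnorm hshr hp hC hasy ε hε
  have hgt : n₀ < szlenkIdx E ε := by
    by_contra hle
    push_neg at hle
    have hmem := Nat.sInf_mem hS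
    obtain ⟨f, hf⟩ := hne
    have hmm : f ∈ (szlenkDeriv ε)^[sInf {n : ℕ |
        (szlenkDeriv ε)^[n] (dualUnitBall E) = ∅}] (dualUnitBall E) :=
      szlenkDeriv_iter_anti ε (dualUnitBall E) hle hf
    rw [hmem] at hmm
    exact hmm
  calc y^p < (n₀:ℝ) + 1 := Nat.lt_floor_add_one _
    _ ≤ (szlenkIdx E ε : ℝ) := by exact_mod_cast hgt

theorem hasSzlenkPowerType_of : HasSzlenkPowerType E p := by
  have hp0 : (0:ℝ) < p := lt_of_lt_of_le one_pos hp
  have hC0 : (0:ℝ) < C := lt_of_lt_of_le one_pos hC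
  set ε₀ : ℝ := min (1/2) (1/(2*C)) with hε₀
  have hε₀pos : 0 < ε₀ := by
    apply lt_min <;> positivity
  have habs : Tendsto (fun ε : ℝ => |Real.log ε|) (𝓝[>] (0:ℝ)) atTop :=
    tendsto_abs_atBot_atTop.comp Real.tendsto_log_nhdsGT_zero
  have hlowlim : Tendsto (fun ε : ℝ => p - (p * Real.log (2*C)) / |Real.log ε|)
      (𝓝[>] (0:ℝ)) (𝓝 p) := by
    have := (tendsto_const_nhds (x := p * Real.log (2*C))
      (f := 𝓝[>] (0:ℝ))).div_atTop habs
    have h2 := (tendsto_const_nhds (x := p) (f := 𝓝[>] (0:ℝ))).sub this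
    simpa using h2
  have huplim : Tendsto (fun ε : ℝ => p + (Real.log 2 + p * Real.log (6*C)) / |Real.log ε|)
      (𝓝[>] (0:ℝ)) (𝓝 p) := by
    have := (tendsto_const_nhds (x := Real.log 2 + p * Real.log (6*C))
      (f := 𝓝[>] (0:ℝ))).div_atTop habs
    have h2 := (tendsto_const_nhds (x := p) (f := 𝓝[>] (0:ℝ))).add this
    simpa using h2
  have hev : ∀ᶠ ε in 𝓝[>] (0:ℝ), ε ∈ Set.Ioo (0:ℝ) ε₀ :=
    Ioo_mem_nhdsGT_of_mem ⟨le_refl 0, hε₀pos⟩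
  refine tendsto_of_tendsto_of_tendsto_of_le_of_le' hlowlim huplim ?_ ?_
  · -- lower bound eventually
    filter_upwards [hev] with ε hε
    obtain ⟨hεpos, hεlt⟩ := hε
    have hε1 : ε < 1 := lt_of_lt_of_le hεlt ((min_le_left _ _).trans (by norm_num))
    have hεC : 2*C*ε ≤ 1 := by
      have h1 : ε ≤ 1/(2*C) := (le_of_lt hεlt).trans (min_le_right _ _)
      calc 2*C*ε ≤ 2*C*(1/(2*C)) := by
            refine mul_le_mul_of_nonneg_left h1 (by positivity)
        _ = 1 := by field_simp
    have hlogneg : Real.log ε < 0 := Real.log_neg hεpos hε1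
    have hlogabs : |Real.log ε| = -Real.log ε := abs_of_neg hlogneg
    have hlogpos : 0 < |Real.log ε| := by rw [hlogabs]; linarith
    have hidx := szlenkIdx_gt hb hnorm hshr hp hC hasy hεpos hεC
    have hy1 : (1:ℝ) ≤ 1/(2*C*ε) := by
      rw [le_div_iff₀ (by positivity)]
      linarith
    have hyp1 : (1:ℝ) ≤ (1/(2*C*ε))^p := by
      calc (1:ℝ) = 1^p := (Real.one_rpow p).symm
        _ ≤ (1/(2*C*ε))^p := Real.rpow_le_rpow zero_le_one hy1 hp0.le
    have hlog1 : Real.log ((1/(2*C*ε))^p) ≤ Real.log (szlenkIdx E ε) := by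
      refine Real.log_le_log (by positivity) hidx.le
    have hlog2 : Real.log ((1/(2*C*ε))^p) = p * (-Real.log (2*C) - Real.log ε) := by
      rw [Real.log_rpow (by positivity), one_div, Real.log_inv,
        Real.log_mul (by positivity) hεpos.ne']
      ring
    have key : p * |Real.log ε| - p * Real.log (2*C) ≤ Real.log (szlenkIdx E ε) := by
      have := hlog1
      rw [hlog2] at this
      rw [hlogabs]
      linarith [this]
    rw [le_div_iff₀ hlogpos]
    have expand : (p - p * Real.log (2*C) / |Real.log ε|) * |Real.log ε|
        = p * |Real.log ε| - p * Real.log (2*C) := by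
      field_simp
    rw [expand]
    exact key
  · -- upper bound eventually
    filter_upwards [hev] with ε hε
    obtain ⟨hεpos, hεlt⟩ := hε
    have hε1 : ε < 1 := lt_of_lt_of_le hεlt ((min_le_left _ _).trans (by norm_num))
    have hεC : 2*C*ε ≤ 1 := by
      have h1 : ε ≤ 1/(2*C) := (le_of_lt hεlt).trans (min_le_right _ _)
      calc 2*C*ε ≤ 2*C*(1/(2*C)) := by
            refine mul_le_mul_of_nonneg_left h1 (by positivity)
        _ = 1 := by field_simp
    have hlogneg : Real.log ε < 0 := Real.log_neg hεpos hε1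
    have hlogabs : |Real.log ε| = -Real.log ε := abs_of_neg hlogneg
    have hlogpos : 0 < |Real.log ε| := by rw [hlogabs]; linarith
    have hidxlo := szlenkIdx_gt hb hnorm hshr hp hC hasy hεpos hεC
    have hidxhi := szlenkIdx_le hb hnorm hshr hp hC hasy hεpos hε1.le
    have hy1 : (1:ℝ) ≤ 1/(2*C*ε) := by
      rw [le_div_iff₀ (by positivity)]
      linarith
    have hidxpos : (0:ℝ) < (szlenkIdx E ε : ℝ) := by
      refine lt_of_lt_of_le ?_ hidxlo.le
      calc (0:ℝ) < 1 := one_pos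
        _ = 1^p := (Real.one_rpow p).symm
        _ ≤ (1/(2*C*ε))^p := Real.rpow_le_rpow zero_le_one hy1 hp0.le
    have h6C1 : (1:ℝ) ≤ 6*C/ε := by
      rw [le_div_iff₀ hεpos]
      nlinarith
    have h6Cp1 : (1:ℝ) ≤ (6*C/ε)^p := by
      calc (1:ℝ) = 1^p := (Real.one_rpow p).symm
        _ ≤ (6*C/ε)^p := Real.rpow_le_rpow zero_le_one h6C1 hp0.le
    have hup2 : (szlenkIdx E ε : ℝ) ≤ 2*(6*C/ε)^p := by linarith
    have hlog1 : Real.log (szlenkIdx E ε) ≤ Real.log (2*(6*C/ε)^p) :=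
      Real.log_le_log hidxpos hup2
    have hlog2 : Real.log (2*(6*C/ε)^p)
        = Real.log 2 + p * (Real.log (6*C) - Real.log ε) := by
      rw [Real.log_mul (by norm_num) (by positivity), Real.log_rpow (by positivity),
        Real.log_div (by positivity) hεpos.ne']
    rw [div_le_iff₀ hlogpos]
    have expand : (p + (Real.log 2 + p * Real.log (6*C)) / |Real.log ε|) * |Real.log ε|
        = p * |Real.log ε| + (Real.log 2 + p * Real.log (6*C)) := by
      field_simp
    rw [expand, hlogabs]
    rw [hlog2] at hlog1
    linarith [hlog1]


end Assembly

end Helpers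

/-- If `E` has a normalized, shrinking, 1-unconditional basis whose dual basis
makes `E*` asymptotic `ℓ_p` for some `p ∈ [1,∞)`, then `Sz(E,ε)` is finite for every `ε > 0`
and the Szlenk power type of `E` equals `p`. -/
theorem szlenkPowerType_of_dual_asymptoticLp
    (E : Type*) [NormedAddCommGroup E] [NormedSpace ℝ E] [CompleteSpace E]
    (e : ℕ → E) (e' : ℕ → StrongDual ℝ E)
    (hb : IsBasis1Unconditional e e') (hnorm : ∀ n, ‖e n‖ = 1) (hshr : ShrinkingBasis e)
    (p : ℝ) (hp : 1 ≤ p)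
    (hasym : ∃ C ≥ 1, IsAsymptoticLp (ENNReal.ofReal p) C
      (fun n (f : StrongDual ℝ E) => f (e n))) :
    SzlenkLeOmega E ∧ HasSzlenkPowerType E p := by
  obtain ⟨C, hC, hasy⟩ := hasym
  exact ⟨szlenkLeOmega_of hb hnorm hshr hp hC hasy,
    hasSzlenkPowerType_of hb hnorm hshr hp hC hasy⟩
end

section
/- Let E be a Banach space with a normalized 1-unconditional basis (e_n) with biorthogonal functionals (e_n*), and let X = (⊕_{n=1}^∞ c0)_E be the E-direct sum of countably many copies of c0. If t_1,…,t_k > 0 are such that ‖Σ_{i=1}^k t_i e_i*‖_{E*} ≤ 1, then ι_{t_1}ι_{t_2}⋯ι_{t_k} B_{X*} ≠ ∅. -/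
open Filter Topology Set
open scoped ENNReal NNReal

section AuxSzlenk

variable {E : Type*} [NormedAddCommGroup E] [NormedSpace ℝ E]
variable {Y : Type*} [NormedAddCommGroup Y] [NormedSpace ℝ Y]

lemma aux_c0_abs_le (f : ZeroAtInftyContinuousMap ℕ ℝ) (m : ℕ) : |f m| ≤ ‖f‖ := by
  rw [← ZeroAtInftyContinuousMap.norm_toBCF_eq_norm]
  exact (Real.norm_eq_abs _) ▸ f.toBCF.norm_coe_le_norm m

lemma aux_c0_tendsto (f : ZeroAtInftyContinuousMap ℕ ℝ) :
    Tendsto (fun m => f m) atTop (𝓝 0) := by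
  have := ZeroAtInftyContinuousMapClass.zero_at_infty f
  rwa [cocompact_eq_atTop] at this

lemma aux_coef_bound {e : ℕ → E} {e' : ℕ → StrongDual ℝ E}
    (hb : IsBasis1Unconditional e e') (hnorm : ∀ n, ‖e n‖ = 1) (j : ℕ) (x : E) :
    |e' j x| ≤ ‖x‖ := by
  obtain ⟨y, hy, hny⟩ := hb.unconditional x (fun n => if n = j then 1 else -1)
    (fun n => by by_cases h : n = j <;> simp [h])
  have hsum := (hb.expansion x).add hy
  have heq : (fun n => (e' n x) • e n + ((if n = j then (1:ℝ) else -1) * e' n x) • e n)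
      = fun n => if n = j then (2 * e' j x) • e j else 0 := by
    funext n
    by_cases h : n = j
    · subst h
      rw [← add_smul, if_pos rfl, if_pos rfl]
      congr 1
      ring
    · have hz : (e' n) x + (-1) * (e' n) x = 0 := by ring
      rw [← add_smul, if_neg h, if_neg h, hz, zero_smul]
  rw [heq] at hsum
  have hxy : x + y = (2 * e' j x) • e j := hsum.unique (hasSum_ite_eq j _)
  have h2 : ‖(2 * e' j x) • e j‖ ≤ ‖x‖ + ‖y‖ := hxy ▸ norm_add_le x y
  rw [norm_smul, hnorm, mul_one, hny, Real.norm_eq_abs, abs_mul] at h2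
  have : |(2:ℝ)| = 2 := by norm_num
  rw [this] at h2
  linarith

lemma szlenkDerivList_subset {X : Type*} [NormedAddCommGroup X] [NormedSpace ℝ X]
    (l : List ℝ) (K : Set (StrongDual ℝ X)) : szlenkDerivList l K ⊆ K := by
  induction l with
  | nil => exact fun f hf => hf
  | cons a l ih => exact fun f hf => ih hf.1

variable (T : Y →ₗ[ℝ] ∀ _ : ℕ, ZeroAtInftyContinuousMap ℕ ℝ)

/-- The functional `y ↦ (T y j)(m)`. -/
noncomputable def coordDual (hco : ∀ (y : Y) (j : ℕ), ‖T y j‖ ≤ ‖y‖) (j m : ℕ) :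
    StrongDual ℝ Y :=
  LinearMap.mkContinuous
    { toFun := fun y => T y j m
      map_add' := fun y z => by simp [map_add]
      map_smul' := fun c y => by simp [map_smul] }
    1 (fun y => by
      rw [one_mul, Real.norm_eq_abs]
      exact (aux_c0_abs_le _ m).trans (hco y j))

@[simp] lemma coordDual_apply (hco : ∀ (y : Y) (j : ℕ), ‖T y j‖ ≤ ‖y‖) (j m : ℕ) (y : Y) :
    coordDual T hco j m y = T y j m := rfl

lemma aux_tendsto (hco : ∀ (y : Y) (j : ℕ), ‖T y j‖ ≤ ‖y‖)
    (g : StrongDual ℝ Y) (s : ℝ) (j : ℕ) :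
    Tendsto (fun m => StrongDual.toWeakDual (g + s • coordDual T hco j m)) atTop
      (𝓝 (StrongDual.toWeakDual g)) := by
  rw [tendsto_iff_forall_eval_tendsto_topDualPairing]
  intro y
  have h0 : Tendsto (fun m => (g : Y → ℝ) y + s * T y j m) atTop (𝓝 ((g : Y → ℝ) y)) := by
    have := ((aux_c0_tendsto (T y j)).const_mul s).const_add ((g : Y → ℝ) y)
    simpa using this
  exact h0

/-- The key inductive claim. -/
lemma aux_claim (hco : ∀ (y : Y) (j : ℕ), ‖T y j‖ ≤ ‖y‖)
    (hwit : ∀ j m, ∃ y : Y, ‖y‖ ≤ 1 ∧ T y j m = 1) :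
    ∀ (k : ℕ) (t : Fin k → ℝ), (∀ i, 0 < t i) → ∀ (off : ℕ) (g : StrongDual ℝ Y),
    (∀ (s : Fin k → ℝ) (m : Fin k → ℕ), (∀ i, |s i| ≤ t i) →
      ‖g + ∑ i, s i • coordDual T hco (off + i) (m i)‖ ≤ 1) →
    g ∈ szlenkDerivList (List.ofFn t) (dualUnitBall Y) := by
  intro k
  induction k with
  | zero =>
    intro t _ off g hg
    have := hg Fin.elim0 Fin.elim0 (fun i => i.elim0)
    simp only [Finset.univ_eq_empty, Finset.sum_empty, add_zero] at this
    simpa [szlenkDerivList, dualUnitBall, List.ofFn_zero, mem_closedBall_zero_iff] using this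
  | succ k ih =>
    intro t ht off g hg
    set D := szlenkDerivList (List.ofFn fun i => t i.succ) (dualUnitBall Y) with hD
    have key : ∀ (s : ℝ) (m : ℕ), |s| ≤ t 0 → g + s • coordDual T hco off m ∈ D := by
      intro s m hs
      apply ih (fun i => t i.succ) (fun i => ht i.succ) (off + 1)
      intro s' m' hs'
      set s'' : Fin (k + 1) → ℝ := Fin.cons s s' with hs''
      set m'' : Fin (k + 1) → ℕ := Fin.cons m m' with hm''
      have hsle : ∀ i : Fin (k + 1), |s'' i| ≤ t i := by
        intro i
        rcases Fin.eq_zero_or_eq_succ i with h | ⟨i', rfl⟩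
        · subst h; simpa [hs''] using hs
        · simpa [hs''] using hs' i'
      have hmain := hg s'' m'' hsle
      rw [Fin.sum_univ_succ] at hmain
      simp only [hs'', hm'', Fin.cons_zero, Fin.cons_succ, Fin.val_zero, add_zero, Fin.val_succ] at hmain
      have hrw : (∑ i : Fin k, s' i • coordDual T hco (off + 1 + i) (m' i))
          = ∑ i : Fin k, s' i • coordDual T hco (off + ((i : ℕ) + 1)) (m' i) :=
        Finset.sum_congr rfl fun i _ => by rw [show off + 1 + (i : ℕ) = off + ((i : ℕ) + 1) by omega]
      rw [hrw]
      rw [← add_assoc] at hmain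
      exact hmain
    have hgD : g ∈ D := by
      have := key 0 0 (by simp [(ht 0).le])
      simpa using this
    rw [List.ofFn_succ]
    refine ⟨hgD, ?_⟩
    intro U hUopen hU
    have hp := (aux_tendsto T hco g (t 0) off).eventually_mem (hUopen.mem_nhds hU)
    have hm := (aux_tendsto T hco g (-(t 0)) off).eventually_mem (hUopen.mem_nhds hU)
    obtain ⟨m, hmp, hmm⟩ := (hp.and hm).exists
    set gp := g + (t 0) • coordDual T hco off m with hgp
    set gm := g + (-(t 0)) • coordDual T hco off m with hgm
    have hgpD : gp ∈ D := key (t 0) m (le_of_eq (abs_of_pos (ht 0)))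
    have hgmD : gm ∈ D := key (-(t 0)) m (by rw [abs_neg]; exact le_of_eq (abs_of_pos (ht 0)))
    set S := {h : StrongDual ℝ Y | h ∈ D ∧ StrongDual.toWeakDual h ∈ U} with hS
    have hSsub : S ⊆ Metric.closedBall 0 1 := fun h hh =>
      szlenkDerivList_subset _ _ hh.1
    have hSbdd : Bornology.IsBounded S := Metric.isBounded_closedBall.subset hSsub
    have hgpS : gp ∈ S := ⟨hgpD, hmp⟩
    have hgmS : gm ∈ S := ⟨hgmD, hmm⟩
    obtain ⟨y, hy1, hy2⟩ := hwit off m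
    have hdiff : gp - gm = (2 * t 0) • coordDual T hco off m := by
      rw [hgp, hgm, add_sub_add_left_eq_sub]
      ext z
      simp only [ContinuousLinearMap.sub_apply, ContinuousLinearMap.smul_apply, smul_eq_mul]
      ring
    have hdist : 2 * t 0 ≤ dist gp gm := by
      rw [dist_eq_norm, hdiff]
      have happ : ((2 * t 0) • coordDual T hco off m) y = (2 * t 0) * (T y off m) := rfl
      have h1 : ‖((2 * t 0) • coordDual T hco off m) y‖
          ≤ ‖(2 * t 0) • coordDual T hco off m‖ * ‖y‖ :=
        ContinuousLinearMap.le_opNorm _ y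
      rw [happ, hy2, mul_one, Real.norm_eq_abs,
        abs_of_pos (by have := ht 0; linarith : (0:ℝ) < 2 * t 0)] at h1
      have h2 : ‖(2 * t 0) • coordDual T hco off m‖ * ‖y‖
          ≤ ‖(2 * t 0) • coordDual T hco off m‖ * 1 :=
        mul_le_mul_of_nonneg_left hy1 (norm_nonneg _)
      rw [mul_one] at h2
      linarith
    calc t 0 < 2 * t 0 := by have := ht 0; linarith
      _ ≤ dist gp gm := hdist
      _ ≤ Metric.diam S := Metric.dist_le_diam_of_mem hSbdd hgpS hgmS

end AuxSzlenk

/-- Let `X = (⊕ₙ c₀)_E`. If `t₁, …, t_k > 0` satisfy `‖Σᵢ tᵢ eᵢ*‖_{E*} ≤ 1`,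
then `ι_{t₁}⋯ι_{t_k} B_{X*} ≠ ∅`. -/
theorem szlenkDerivList_nonempty_of_dual_vector
    (E : Type*) [NormedAddCommGroup E] [NormedSpace ℝ E] [CompleteSpace E]
    (e : ℕ → E) (e' : ℕ → StrongDual ℝ E)
    (hb : IsBasis1Unconditional e e') (hnorm : ∀ n, ‖e n‖ = 1)
    (Y : Type*) [NormedAddCommGroup Y] [NormedSpace ℝ Y] [CompleteSpace Y]
    (T : Y →ₗ[ℝ] ∀ _ : ℕ, ZeroAtInftyContinuousMap ℕ ℝ)
    (hT : IsDirectSumE e (fun _ => ZeroAtInftyContinuousMap ℕ ℝ) T)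
    (k : ℕ) (t : Fin k → ℝ) (ht : ∀ i, 0 < t i)
    (hle : ‖∑ i, t i • e' i.1‖ ≤ 1) :
    (szlenkDerivList (List.ofFn t) (dualUnitBall Y)).Nonempty := by
  classical
  have hsummable : ∀ y : Y, Summable fun n => ‖T y n‖ • e n := by
    intro y
    have : T y ∈ Set.range T := ⟨y, rfl⟩
    rwa [hT.range_eq] at this
  have happly : ∀ (y : Y) (j : ℕ), e' j (∑' n, ‖T y n‖ • e n) = ‖T y j‖ := by
    intro y j
    rw [ContinuousLinearMap.map_tsum (e' j) (hsummable y)]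
    have hterm : ∀ n, e' j (‖T y n‖ • e n) = if n = j then ‖T y j‖ else 0 := by
      intro n
      rw [map_smul]
      by_cases h : n = j
      · subst h; simp [hb.biorth]
      · simp [hb.biorth, h, Ne.symm h]
    rw [tsum_congr hterm, tsum_ite_eq]
  have hco : ∀ (y : Y) (j : ℕ), ‖T y j‖ ≤ ‖y‖ := by
    intro y j
    have h1 := aux_coef_bound hb hnorm j (∑' n, ‖T y n‖ • e n)
    rw [happly y j] at h1
    calc ‖T y j‖ ≤ |‖T y j‖| := le_abs_self _
      _ ≤ ‖∑' n, ‖T y n‖ • e n‖ := h1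
      _ = ‖y‖ := (hT.norm_eq y).symm
  have hwit : ∀ j m, ∃ y : Y, ‖y‖ ≤ 1 ∧ T y j m = 1 := by
    intro j m
    have hz : Tendsto (fun i : ℕ => if i = m then (1:ℝ) else 0) (cocompact ℕ) (𝓝 0) := by
      rw [cocompact_eq_atTop]
      refine tendsto_const_nhds.congr' ?_
      filter_upwards [eventually_gt_atTop m] with i hi
      simp [hi.ne']
    set δ : ZeroAtInftyContinuousMap ℕ ℝ :=
      { toFun := fun i => if i = m then 1 else 0
        continuous_toFun := continuous_of_discreteTopology
        zero_at_infty' := hz } with hδ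
    have hδapp : ∀ i, δ i = if i = m then 1 else 0 := fun i => rfl
    have hδm : δ m = 1 := by rw [hδapp]; simp
    have hδle : ‖δ‖ ≤ 1 := by
      rw [← ZeroAtInftyContinuousMap.norm_toBCF_eq_norm]
      refine (BoundedContinuousFunction.norm_le (by norm_num)).mpr fun i => ?_
      have : δ.toBCF i = if i = m then 1 else 0 := rfl
      rw [this]
      by_cases h : i = m <;> simp [h]
    set x : ∀ _ : ℕ, ZeroAtInftyContinuousMap ℕ ℝ := Pi.single j δ with hx
    have hxfun : (fun n => ‖x n‖ • e n) = fun n => if n = j then ‖δ‖ • e j else 0 := by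
      funext n
      by_cases h : n = j
      · subst h; simp [hx]
      · simp [hx, Pi.single_eq_of_ne h, h]
    have hxs : Summable fun n => ‖x n‖ • e n := by
      rw [hxfun]
      refine summable_of_ne_finset_zero (s := {j}) fun n hn => ?_
      simp only [Finset.mem_singleton] at hn
      simp [hn]
    have hxr : x ∈ Set.range T := by rw [hT.range_eq]; exact hxs
    obtain ⟨y, hy⟩ := hxr
    refine ⟨y, ?_, ?_⟩
    · rw [hT.norm_eq y, hy, hxfun, tsum_ite_eq, norm_smul, hnorm, mul_one]
      simpa using hδle
    · rw [hy, hx]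
      simp [hδm]
  have h0 : (0 : StrongDual ℝ Y) ∈ szlenkDerivList (List.ofFn t) (dualUnitBall Y) := by
    apply aux_claim T hco hwit k t ht 0
    intro s m hs
    rw [zero_add]
    refine ContinuousLinearMap.opNorm_le_bound _ zero_le_one fun y => ?_
    rw [one_mul, Real.norm_eq_abs]
    have hval : (∑ i, s i • coordDual T hco (0 + (i : ℕ)) (m i)) y
        = ∑ i, s i * T y i (m i) := by
      rw [ContinuousLinearMap.sum_apply]
      exact Finset.sum_congr rfl fun i _ => by simp
    rw [hval]
    have hb1 : |∑ i, s i * T y i (m i)| ≤ ∑ i, t i * ‖T y (i : ℕ)‖ := by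
      refine (Finset.abs_sum_le_sum_abs _ _).trans ?_
      refine Finset.sum_le_sum fun i _ => ?_
      rw [abs_mul]
      exact mul_le_mul (hs i) (aux_c0_abs_le _ _) (abs_nonneg _) ((abs_nonneg _).trans (hs i))
    have heval : (∑ i, t i • e' i.1) (∑' n, ‖T y n‖ • e n) = ∑ i, t i * ‖T y (i : ℕ)‖ := by
      rw [ContinuousLinearMap.sum_apply]
      exact Finset.sum_congr rfl fun i _ => by
        rw [ContinuousLinearMap.smul_apply, happly y i, smul_eq_mul]
    calc |∑ i, s i * T y i (m i)| ≤ ∑ i, t i * ‖T y (i : ℕ)‖ := hb1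
      _ = (∑ i, t i • e' i.1) (∑' n, ‖T y n‖ • e n) := heval.symm
      _ ≤ |(∑ i, t i • e' i.1) (∑' n, ‖T y n‖ • e n)| := le_abs_self _
      _ ≤ ‖∑ i, t i • e' i.1‖ * ‖∑' n, ‖T y n‖ • e n‖ := by
          have := (∑ i, t i • e' i.1).le_opNorm (∑' n, ‖T y n‖ • e n)
          rwa [Real.norm_eq_abs] at this
      _ ≤ 1 * ‖y‖ := by
          rw [← hT.norm_eq y]
          exact mul_le_mul_of_nonneg_right hle (norm_nonneg _)
      _ = ‖y‖ := one_mul _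
  exact ⟨0, h0⟩
end

section
/- Let E be a Banach space with a normalized, shrinking, 1-unconditional basis (e_n) such that the dual E* is C-asymptotic ℓ_p with respect to the biorthogonal sequence (e_n*), for some p ∈ [1,∞) and C ≥ 1. Then for every ε ∈ (0, 1/C) one has Sz(E,ε) > ⌊(Cε)^{-p}⌋; i.e., ι_ε^N B_{E*} ≠ ∅ for N = ⌊(Cε)^{-p}⌋. -/
open Filter Topology Set
open scoped ENNReal NNReal

section MainAux

variable {E : Type*} [NormedAddCommGroup E] [NormedSpace ℝ E]

/-- coordinate functional bound for a 1-unconditional normalized basis -/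
theorem aux_coord_abs_le (e : ℕ → E) (e' : ℕ → StrongDual ℝ E)
    (hnorm : ∀ n, ‖e n‖ = 1)
    (huncond : ∀ (x : E) (σ : ℕ → ℝ), (∀ n, σ n = 1 ∨ σ n = -1) →
      ∃ y : E, HasSum (fun n => (σ n * e' n x) • e n) y ∧ ‖y‖ = ‖x‖)
    (hexp : ∀ x : E, HasSum (fun n => e' n x • e n) x)
    (m : ℕ) (x : E) : |e' m x| ≤ ‖x‖ := by
  classical
  set σ : ℕ → ℝ := fun n => if n = m then -1 else 1 with hσdef
  have hσ : ∀ n, σ n = 1 ∨ σ n = -1 := by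
    intro n; by_cases h : n = m <;> simp [hσdef, h]
  obtain ⟨y, hy, hyx⟩ := huncond x σ hσ
  have hsub := (hexp x).sub hy
  have heq : (fun n => e' n x • e n - (σ n * e' n x) • e n)
      = fun n => if n = m then (2 * e' m x) • e m else 0 := by
    funext n
    by_cases h : n = m
    · subst h
      simp only [hσdef, if_pos rfl, if_true]
      module
    · simp [hσdef, if_neg h, one_mul, sub_self]
  rw [heq] at hsub
  have h2 : x - y = (2 * e' m x) • e m := hsub.unique (hasSum_ite_eq m _)
  have h3 : ‖x - y‖ = 2 * |e' m x| := by
    rw [h2, norm_smul, hnorm m, mul_one, Real.norm_eq_abs, abs_mul]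
    norm_num
  have h4 : ‖x - y‖ ≤ 2 * ‖x‖ := by
    calc ‖x - y‖ ≤ ‖x‖ + ‖y‖ := norm_sub_le x y
    _ = 2 * ‖x‖ := by rw [hyx]; ring
  linarith [h3 ▸ h4]

end MainAux

/-- If `E*` is `C`-asymptotic `ℓ_p` with respect to the dual basis, then for
every `ε ∈ (0, 1/C)` one has `ι_ε^N B_{E*} ≠ ∅` for `N = ⌊(Cε)^{-p}⌋`, i.e.
`Sz(E,ε) > ⌊(Cε)^{-p}⌋`. -/
theorem szlenkIdx_lower_of_dual_asymptoticLp
    (E : Type*) [NormedAddCommGroup E] [NormedSpace ℝ E] [CompleteSpace E]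
    (e : ℕ → E) (e' : ℕ → StrongDual ℝ E)
    (hb : IsBasis1Unconditional e e') (hnorm : ∀ n, ‖e n‖ = 1) (hshr : ShrinkingBasis e)
    (p : ℝ) (hp : 1 ≤ p) (C : ℝ) (hC : 1 ≤ C)
    (hasym : IsAsymptoticLp (ENNReal.ofReal p) C
      (fun n (f : StrongDual ℝ E) => f (e n)))
    (ε : ℝ) (hε : ε ∈ Set.Ioo (0:ℝ) (1/C)) :
    ((szlenkDeriv ε)^[⌊(C * ε) ^ (-p)⌋₊] (dualUnitBall E)).Nonempty := by
  classical
  obtain ⟨hε0, hεC⟩ := hε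
  have hC0 : (0:ℝ) < C := lt_of_lt_of_le one_pos hC
  have hCε : 0 < C * ε := mul_pos hC0 hε0
  have hp0 : (0:ℝ) < p := lt_of_lt_of_le one_pos hp
  set N : ℕ := ⌊(C * ε) ^ (-p)⌋₊ with hNdef
  have hNle : (N : ℝ) ≤ (C * ε) ^ (-p) := Nat.floor_le (Real.rpow_nonneg hCε.le _)
  -- norm facts about e'
  have hcoord : ∀ m (x : E), |e' m x| ≤ ‖x‖ :=
    aux_coord_abs_le e e' hnorm hb.unconditional hb.expansion
  have he'le : ∀ m, ‖e' m‖ ≤ 1 := fun m =>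
    (e' m).opNorm_le_bound zero_le_one (fun x => by
      rw [Real.norm_eq_abs, one_mul]; exact hcoord m x)
  have he'ge : ∀ m, (1:ℝ) ≤ ‖e' m‖ := by
    intro m
    have h := (e' m).le_opNorm (e m)
    rw [hnorm m, mul_one, hb.biorth m m, if_pos rfl] at h
    simpa using h
  -- weak* null
  have hwnull : ∀ x : E, Tendsto (fun n => e' n x) atTop (𝓝 0) := by
    intro x
    have hs := (hb.expansion x).summable.tendsto_atTop_zero
    have hn : Tendsto (fun n => ‖e' n x • e n‖) atTop (𝓝 0) :=
      (tendsto_zero_iff_norm_tendsto_zero.mp hs)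
    have heq : (fun n => ‖e' n x • e n‖) = fun n => ‖e' n x‖ := by
      funext n; rw [norm_smul, hnorm n, mul_one]
    rw [heq] at hn
    exact tendsto_zero_iff_norm_tendsto_zero.mpr hn
  -- iterates stay in the ball
  have iter_subset : ∀ k, (szlenkDeriv ε)^[k] (dualUnitBall E) ⊆ dualUnitBall E := by
    intro k
    induction k with
    | zero => exact subset_rfl
    | succ k ih =>
      rw [Function.iterate_succ_apply']
      exact fun f hf => ih hf.1
  -- main induction
  have key : ∀ (k i : ℕ) (m : ℕ → ℕ) (σ : ℕ → ℝ), i + k ≤ N →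
      (∀ j, j < i → N ≤ m j) → (∀ j j', j < j' → j' < i → m j < m j') →
      (∀ j, j < i → σ j = 1 ∨ σ j = -1) →
      (∑ j ∈ Finset.range i, (ε * σ j) • e' (m j)) ∈
        (szlenkDeriv ε)^[k] (dualUnitBall E) := by
    intro k
    induction k with
    | zero =>
      intro i m σ hik hmN hmono hσ
      have hiN : i ≤ N := by omega
      -- the asymptotic ℓ_p upper estimate
      set x : Fin i → StrongDual ℝ E := fun j => (ε * σ j) • e' (m j) with hxdef
      have hcoordval : ∀ (j : Fin i) (m' : ℕ),
          (x j) (e m') = (ε * σ j) * (if m (j : ℕ) = m' then 1 else 0) := by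
        intro j m'
        simp [hxdef, hb.biorth]
      have hsupp : ∀ (j : Fin i) (m' : ℕ), (x j) (e m') ≠ 0 → m' = m (j : ℕ) := by
        intro j m' h
        by_contra hne
        rw [hcoordval, if_neg (fun h' => hne h'.symm), mul_zero] at h
        exact h rfl
      have h1 : ∀ j, {m' | (fun n (f : StrongDual ℝ E) => f (e n)) m' (x j) ≠ 0}.Finite := by
        intro j
        apply Set.Finite.subset (Set.finite_singleton (m (j:ℕ)))
        intro m' hm'
        exact hsupp j m' hm'
      have h2 : ∀ (j : Fin i) m', (x j) (e m') ≠ 0 → i ≤ m' + 1 := by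
        intro j m' h
        have := hsupp j m' h
        have := hmN (j:ℕ) j.isLt
        omega
      have h3 : ∀ (j k' : Fin i), j < k' → ∀ m' m'',
          (x j) (e m') ≠ 0 → (x k') (e m'') ≠ 0 → m' < m'' := by
        intro j k' hjk m' m'' hj hk
        rw [hsupp j m' hj, hsupp k' m'' hk]
        exact hmono _ _ hjk k'.isLt
      have hub := (hasym i x h1 h2 h3).2
      -- compute/bound the pNorm
      have hxnorm : ∀ j : Fin i, ‖x j‖ ≤ ε := by
        intro j
        have habs : |σ (j:ℕ)| = 1 := by
          rcases hσ (j:ℕ) j.isLt with h | h <;> simp [h]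
        simp only [hxdef, norm_smul, Real.norm_eq_abs, abs_mul, habs, mul_one,
          abs_of_pos hε0]
        calc ε * ‖e' (m (j:ℕ))‖ ≤ ε * 1 :=
              mul_le_mul_of_nonneg_left (he'le _) hε0.le
          _ = ε := mul_one ε
      have hpne : ENNReal.ofReal p ≠ ∞ := ENNReal.ofReal_ne_top
      have hptor : (ENNReal.ofReal p).toReal = p := ENNReal.toReal_ofReal (by linarith)
      have hpn : pNorm (ENNReal.ofReal p) (fun j => ‖x j‖) ≤ (i:ℝ) ^ (1/p) * ε := by
        rw [pNorm, if_neg hpne, hptor]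
        have hsum : (∑ j : Fin i, |‖x j‖| ^ p) ≤ (i:ℝ) * ε ^ p := by
          calc (∑ j : Fin i, |‖x j‖| ^ p) ≤ ∑ _j : Fin i, ε ^ p := by
                apply Finset.sum_le_sum
                intro j _
                rw [abs_norm]
                exact Real.rpow_le_rpow (norm_nonneg _) (hxnorm j) hp0.le
            _ = (i:ℝ) * ε ^ p := by
                rw [Finset.sum_const, Finset.card_univ, Fintype.card_fin, nsmul_eq_mul]
        calc (∑ j : Fin i, |‖x j‖| ^ p) ^ (1/p) ≤ ((i:ℝ) * ε ^ p) ^ (1/p) :=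
              Real.rpow_le_rpow
                (Finset.sum_nonneg fun j _ => Real.rpow_nonneg (abs_nonneg _) _)
                hsum (by positivity)
          _ = (i:ℝ) ^ (1/p) * ε := by
              rw [Real.mul_rpow (Nat.cast_nonneg i) (Real.rpow_nonneg hε0.le p)]
              congr 1
              rw [← Real.rpow_mul hε0.le, mul_one_div, div_self hp0.ne', Real.rpow_one]
      have hiNr : ((i:ℝ)) ^ (1/p) ≤ (C * ε)⁻¹ := by
        have h1 : (i:ℝ) ≤ (C * ε) ^ (-p) := le_trans (Nat.cast_le.mpr hiN) hNle
        calc ((i:ℝ)) ^ (1/p) ≤ ((C * ε) ^ (-p)) ^ (1/p) :=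
              Real.rpow_le_rpow (Nat.cast_nonneg i) h1 (by positivity)
          _ = (C * ε)⁻¹ := by
              rw [← Real.rpow_mul hCε.le]
              rw [show -p * (1/p) = (-1:ℝ) by field_simp]
              exact Real.rpow_neg_one _
      have hfin : ‖∑ j : Fin i, x j‖ ≤ 1 := by
        calc ‖∑ j : Fin i, x j‖ ≤ C * pNorm (ENNReal.ofReal p) (fun j => ‖x j‖) := hub
          _ ≤ C * ((i:ℝ) ^ (1/p) * ε) := mul_le_mul_of_nonneg_left hpn (by linarith)
          _ ≤ C * ((C * ε)⁻¹ * ε) := by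
              have h2 : (i:ℝ) ^ (1/p) * ε ≤ (C * ε)⁻¹ * ε :=
                mul_le_mul_of_nonneg_right hiNr hε0.le
              exact mul_le_mul_of_nonneg_left h2 (by linarith)
          _ = 1 := by field_simp
      have heqsum : (∑ j ∈ Finset.range i, (ε * σ j) • e' (m j)) = ∑ j : Fin i, x j :=
        (Fin.sum_univ_eq_sum_range (fun j => (ε * σ j) • e' (m j)) i).symm
      simp only [Function.iterate_zero_apply]
      rw [heqsum]
      simp only [dualUnitBall, Metric.mem_closedBall, dist_zero_right]
      exact hfin
    | succ k ih =>
      intro i m σ hik hmN hmono hσ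
      rw [Function.iterate_succ_apply']
      refine ⟨ih i m σ (by omega) hmN hmono hσ, ?_⟩
      intro U hU hfU
      set f : StrongDual ℝ E := ∑ j ∈ Finset.range i, (ε * σ j) • e' (m j) with hfdef
      -- weak* convergence of f + c • e' t to f
      have htend : ∀ c : ℝ, Tendsto (fun t => StrongDual.toWeakDual (f + c • e' t))
          atTop (𝓝 (StrongDual.toWeakDual f)) := by
        intro c
        rw [tendsto_iff_forall_eval_tendsto_topDualPairing]
        intro y
        have : Tendsto (fun t => f y + c * e' t y) atTop (𝓝 (f y + c * 0)) :=
          tendsto_const_nhds.add ((hwnull y).const_mul c)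
        rw [mul_zero, add_zero] at this
        exact this
      have hev1 := (htend (ε * 1)).eventually_mem (hU.mem_nhds hfU)
      have hev2 := (htend (ε * (-1))).eventually_mem (hU.mem_nhds hfU)
      set B : ℕ := max N ((Finset.range i).sup m + 1) with hBdef
      obtain ⟨t, ht⟩ := ((hev1.and hev2).and (eventually_ge_atTop B)).exists
      obtain ⟨⟨ht1, ht2⟩, htB⟩ := ht
      have htN : N ≤ t := le_trans (le_max_left _ _) htB
      have htm : ∀ j, j < i → m j < t := by
        intro j hj
        have : m j ≤ (Finset.range i).sup m := Finset.le_sup (Finset.mem_range.mpr hj)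
        omega
      -- the two perturbed vectors are in the k-th derived set
      have hmem : ∀ s : ℝ, s = 1 ∨ s = -1 →
          f + (ε * s) • e' t ∈ (szlenkDeriv ε)^[k] (dualUnitBall E) := by
        intro s hs
        set m' : ℕ → ℕ := fun j => if j = i then t else m j with hm'def
        set σ' : ℕ → ℝ := fun j => if j = i then s else σ j with hσ'def
        have hsum : (∑ j ∈ Finset.range (i+1), (ε * σ' j) • e' (m' j))
            = f + (ε * s) • e' t := by
          rw [Finset.sum_range_succ, hfdef]
          congr 1
          · apply Finset.sum_congr rfl
            intro j hj
            have hji : j ≠ i := by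
              have := Finset.mem_range.mp hj; omega
            simp [hm'def, hσ'def, if_neg hji]
          · simp [hm'def, hσ'def]
        rw [← hsum]
        apply ih (i+1) m' σ' (by omega)
        · intro j hj
          by_cases h : j = i
          · simp [hm'def, h, htN]
          · have : j < i := by omega
            simpa [hm'def, if_neg h] using hmN j this
        · intro j j' hjj' hj'
          by_cases h' : j' = i
          · have hji : j ≠ i := by omega
            have hj : j < i := by omega
            simp only [hm'def, if_neg hji, if_pos h']
            exact htm j hj
          · have hj' : j' < i := by omega
            have hji : j ≠ i := by omega
            simp only [hm'def, if_neg hji, if_neg h']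
            exact hmono j j' hjj' hj'
        · intro j hj
          by_cases h : j = i
          · simp [hσ'def, h, hs]
          · simpa [hσ'def, if_neg h] using hσ j (by omega)
      have hg1 := hmem 1 (Or.inl rfl)
      have hg2 := hmem (-1) (Or.inr rfl)
      -- diameter estimate
      set S := {g | g ∈ (szlenkDeriv ε)^[k] (dualUnitBall E) ∧
          StrongDual.toWeakDual g ∈ U} with hSdef
      have hbd : Bornology.IsBounded S := by
        apply (Metric.isBounded_closedBall (x := (0 : StrongDual ℝ E)) (r := 1)).subset
        intro g hg
        exact iter_subset k hg.1
      have hg1S : f + (ε * 1) • e' t ∈ S := ⟨hg1, ht1⟩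
      have hg2S : f + (ε * (-1)) • e' t ∈ S := ⟨hg2, ht2⟩
      have hdist : dist (f + (ε * 1) • e' t) (f + (ε * (-1)) • e' t) = 2 * ε * ‖e' t‖ := by
        rw [dist_eq_norm]
        have : (f + (ε * 1) • e' t) - (f + (ε * (-1)) • e' t) = (2 * ε) • e' t := by
          module
        rw [this, norm_smul, Real.norm_eq_abs, abs_of_pos (by linarith)]
      calc ε < 2 * ε * 1 := by linarith
        _ ≤ 2 * ε * ‖e' t‖ := by
            have := he'ge t
            nlinarith
        _ = dist (f + (ε * 1) • e' t) (f + (ε * (-1)) • e' t) := hdist.symm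
        _ ≤ Metric.diam S := Metric.dist_le_diam_of_mem hbd hg1S hg2S
  have h0 := key N 0 (fun _ => 0) (fun _ => 1) (by omega)
    (by intro j hj; omega) (by intro j j' h h'; omega) (by intro j hj; left; rfl)
  rw [Finset.sum_range_zero] at h0
  exact ⟨0, h0⟩
end
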